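/- arXiv:2502.02898 — 6 statements merged into one kernel-verified Lean document; each statement's English description precedes it below -/
import Mathlib

section
/- Let f be in the class BT_B with Taylor coefficients a_n, and let γ_1 = a_2/2 be its first logarithmic coefficient. Then |γ_1| ≤ 1/8. -/
open Complex Metric

/-- Principal branch of the square root: `w^(1/2) = exp((1/2) * Log w)`. -/
noncomputable def psqrt (w : ℂ) : ℂ := Complex.exp ((1/2 : ℂ) * Complex.log w)

/-- The `n`-th Taylor coefficient of `f` at `0`, i.e. `f^(n)(0)/n!`. -/
noncomputable def tCoeff (f : ℂ → ℂ) (n : ℕ) : ℂ := iteratedDeriv n f 0 / n.factorial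

/-- The class `BT_B` of bounded turning functions associated with the bean-shaped domain:
`f` is analytic on the unit disk, `f 0 = 0`, `f' 0 = 1`, `f` injective on the disk,
and `f'(z) = (1 + tanh (ω z))^(1/2)` for a Schwarz function `ω`. -/
def IsBTB (f : ℂ → ℂ) : Prop :=
  AnalyticOnNhd ℂ f (ball 0 1) ∧ f 0 = 0 ∧ deriv f 0 = 1 ∧
  Set.InjOn f (ball 0 1) ∧
  ∃ ω : ℂ → ℂ, AnalyticOnNhd ℂ ω (ball 0 1) ∧ ω 0 = 0 ∧
    (∀ z ∈ ball (0:ℂ) 1, ‖ω z‖ < 1) ∧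
    (∀ z ∈ ball (0:ℂ) 1, deriv f z = psqrt (1 + Complex.tanh (ω z)))

theorem BTB_gamma1_bound (f : ℂ → ℂ) (hf : IsBTB f) :
    ‖tCoeff f 2 / 2‖ ≤ 1/8 := by
  obtain ⟨hfa, hf0, hf'0, hinj, ω, hωa, hω0, hωlt, hfeq⟩ := hf
  have h0 : (0:ℂ) ∈ ball (0:ℂ) 1 := by simp
  -- Schwarz lemma for ω
  have hωd : DifferentiableOn ℂ ω (ball 0 1) := fun z hz =>
    (hωa z hz).differentiableAt.differentiableWithinAt
  have hmaps : Set.MapsTo ω (ball (0:ℂ) 1) (ball (0:ℂ) 1) := fun z hz => by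
    simpa [mem_ball_zero_iff] using hωlt z hz
  have hSchwarz : ‖deriv ω 0‖ ≤ 1 :=
    Complex.norm_deriv_le_one_of_mapsTo_ball hωd
      (by rw [hω0]; exact hmaps.mono_right ball_subset_closedBall) one_pos
  set d := deriv ω 0 with hd
  have hωder : HasDerivAt ω d 0 := (hωa 0 h0).differentiableAt.hasDerivAt
  -- derivative of tanh at 0
  have htanh : HasDerivAt Complex.tanh 1 0 := by
    have h1 := Complex.hasDerivAt_sinh 0
    have h2 := Complex.hasDerivAt_cosh 0
    have h3 : HasDerivAt (fun z => Complex.sinh z / Complex.cosh z)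
        ((Complex.cosh 0 * Complex.cosh 0 - Complex.sinh 0 * Complex.sinh 0)
          / Complex.cosh 0 ^ 2) 0 := h1.div h2 (by simp)
    have h4 : (fun z => Complex.sinh z / Complex.cosh z) = Complex.tanh :=
      funext fun z => (Complex.tanh_eq_sinh_div_cosh z).symm
    rw [h4] at h3
    simpa using h3
  -- derivative of z ↦ 1 + tanh (ω z) at 0
  have htanh' : HasDerivAt Complex.tanh 1 (ω 0) := by rw [hω0]; exact htanh
  have htω : HasDerivAt (fun z => Complex.tanh (ω z)) d 0 := by
    simpa [Function.comp_def] using htanh'.comp 0 hωder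
  have haff : HasDerivAt (fun z => 1 + Complex.tanh (ω z)) d 0 := htω.const_add 1
  -- derivative of z ↦ log (1 + tanh (ω z)) at 0
  have hpt : (fun z => 1 + Complex.tanh (ω z)) 0 = 1 := by simp [hω0]
  have hlog : HasDerivAt Complex.log ((1:ℂ)⁻¹) ((fun z => 1 + Complex.tanh (ω z)) 0) := by
    rw [hpt]; exact Complex.hasDerivAt_log (by simp [Complex.slitPlane])
  have hlogω : HasDerivAt (fun z => Complex.log (1 + Complex.tanh (ω z))) d 0 := by
    simpa [Function.comp_def] using hlog.comp 0 haff
  have hhalf : HasDerivAt (fun z => (1/2 : ℂ) * Complex.log (1 + Complex.tanh (ω z)))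
      ((1/2 : ℂ) * d) 0 := hlogω.const_mul _
  have hexp : HasDerivAt (fun z => psqrt (1 + Complex.tanh (ω z))) (d / 2) 0 := by
    have h := (Complex.hasDerivAt_exp ((1/2 : ℂ) *
        Complex.log ((fun z => 1 + Complex.tanh (ω z)) 0))).comp 0 hhalf
    have hval : Complex.exp ((1/2 : ℂ) *
        Complex.log ((fun z => 1 + Complex.tanh (ω z)) 0)) = 1 := by
      rw [hpt]; simp
    rw [hval] at h
    have h2 : HasDerivAt (fun z => psqrt (1 + Complex.tanh (ω z))) (1 * ((1/2:ℂ) * d)) 0 := by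
      simpa [Function.comp_def, psqrt] using h
    convert h2 using 1
    ring
  -- deriv f agrees with the formula near 0
  have heq : deriv f =ᶠ[nhds (0:ℂ)] fun z => psqrt (1 + Complex.tanh (ω z)) :=
    Filter.eventuallyEq_of_mem (isOpen_ball.mem_nhds h0) hfeq
  have hdd : deriv (deriv f) 0 = d / 2 := by
    rw [heq.deriv_eq, hexp.deriv]
  have h2 : iteratedDeriv 2 f 0 = d / 2 := by
    rw [show (2:ℕ) = 1 + 1 from rfl, iteratedDeriv_succ, iteratedDeriv_one, hdd]
  have hco : tCoeff f 2 / 2 = d / 8 := by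
    rw [tCoeff, h2]
    norm_num
    ring
  rw [hco, norm_div]
  have h8 : ‖(8:ℂ)‖ = 8 := by norm_num
  rw [h8]
  linarith
end

section
/- Let f be in the class BT_B with Taylor coefficients a_n, and let γ_2 = (1/2)(a_3 − a_2²/2) be its second logarithmic coefficient. Then |γ_2| ≤ 1/12. -/
open Complex Metric

open Filter Topology

noncomputable def gfun (w : ℂ) : ℂ := psqrt (1 + Complex.tanh w)

lemma hasDerivAt_tanh' {w : ℂ} (h : Complex.cosh w ≠ 0) :
    HasDerivAt Complex.tanh ((Complex.cosh w ^ 2)⁻¹) w := by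
  have hfe : Complex.tanh = fun z => Complex.sinh z / Complex.cosh z :=
    funext fun z => Complex.tanh_eq_sinh_div_cosh z
  rw [hfe]
  have := (Complex.hasDerivAt_sinh w).div (Complex.hasDerivAt_cosh w) h
  refine this.congr_deriv (Eq.symm ?_)
  field_simp
  linear_combination -Complex.cosh_sq_sub_sinh_sq w

lemma one_sub_tanh_sq {w : ℂ} (hc : Complex.cosh w ≠ 0) :
    1 - Complex.tanh w ^ 2 = (Complex.cosh w ^ 2)⁻¹ := by
  have hc2 : Complex.cosh w ^ 2 ≠ 0 := pow_ne_zero 2 hc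
  rw [Complex.tanh_eq_sinh_div_cosh, div_pow, one_sub_div hc2, Complex.cosh_sq_sub_sinh_sq, one_div]

lemma hasDerivAt_gfun {w : ℂ} (hc : Complex.cosh w ≠ 0)
    (hs : (1 + Complex.tanh w) ∈ Complex.slitPlane) :
    HasDerivAt gfun (gfun w * ((1 - Complex.tanh w) / 2)) w := by
  have hne : (1 : ℂ) + Complex.tanh w ≠ 0 := Complex.slitPlane_ne_zero hs
  have h1 : HasDerivAt (fun z => 1 + Complex.tanh z) ((Complex.cosh w ^ 2)⁻¹) w :=
    (hasDerivAt_tanh' hc).const_add 1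
  have h2 : HasDerivAt Complex.log (1 + Complex.tanh w)⁻¹ (1 + Complex.tanh w) :=
    Complex.hasDerivAt_log hs
  have h3 := h2.comp w h1
  have h4 := h3.const_mul (1/2 : ℂ)
  have h5 := h4.cexp
  refine h5.congr_deriv (Eq.symm ?_)
  show gfun w * ((1 - Complex.tanh w) / 2)
      = Complex.exp ((1/2 : ℂ) * Complex.log (1 + Complex.tanh w))
        * ((1/2 : ℂ) * ((1 + Complex.tanh w)⁻¹ * (Complex.cosh w ^ 2)⁻¹))
  have key : (1 + Complex.tanh w)⁻¹ * (Complex.cosh w ^ 2)⁻¹ = 1 - Complex.tanh w := by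
    have h6 : (1 + Complex.tanh w) * (1 - Complex.tanh w) = (Complex.cosh w ^ 2)⁻¹ := by
      linear_combination one_sub_tanh_sq hc
    rw [← h6, inv_mul_cancel_left₀ hne]
  rw [key]
  unfold gfun psqrt
  ring

lemma mobius_le_one {a w : ℂ} (ha : ‖a‖ < 1) (hw : ‖w‖ ≤ 1) :
    ‖(w - a) * (1 - (starRingEnd ℂ) a * w)⁻¹‖ ≤ 1 := by
  have hden : (1 : ℂ) - (starRingEnd ℂ) a * w ≠ 0 := by
    intro h
    rw [sub_eq_zero] at h
    have h2 : (1:ℝ) = ‖(starRingEnd ℂ) a * w‖ := by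
      rw [← h]; simp
    rw [norm_mul, Complex.norm_conj] at h2
    nlinarith [norm_nonneg a, norm_nonneg w]
  have hkey : ‖w - a‖ ≤ ‖1 - (starRingEnd ℂ) a * w‖ := by
    have expand : Complex.normSq (1 - (starRingEnd ℂ) a * w) - Complex.normSq (w - a)
        = (1 - Complex.normSq a) * (1 - Complex.normSq w) := by
      simp only [Complex.normSq_apply, Complex.sub_re, Complex.sub_im, Complex.mul_re,
        Complex.mul_im, Complex.conj_re, Complex.conj_im, Complex.one_re, Complex.one_im]
      ring
    have ha2 : Complex.normSq a < 1 := by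
      rw [Complex.normSq_eq_norm_sq]; nlinarith [norm_nonneg a]
    have hw2 : Complex.normSq w ≤ 1 := by
      rw [Complex.normSq_eq_norm_sq]; nlinarith [norm_nonneg w]
    have h1 : Complex.normSq (w - a) ≤ Complex.normSq (1 - (starRingEnd ℂ) a * w) := by
      nlinarith
    rw [Complex.norm_def, Complex.norm_def]
    exact Real.sqrt_le_sqrt h1
  rw [norm_mul, norm_inv]
  have hpos : 0 < ‖1 - (starRingEnd ℂ) a * w‖ := norm_pos_iff.mpr hden
  calc ‖w - a‖ * (‖1 - (starRingEnd ℂ) a * w‖)⁻¹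
      ≤ ‖1 - (starRingEnd ℂ) a * w‖ * (‖1 - (starRingEnd ℂ) a * w‖)⁻¹ := by
        gcongr
    _ = 1 := mul_inv_cancel₀ hpos.ne'

lemma schwarz_pick_coeff {φ : ℂ → ℂ} (hφ : DifferentiableOn ℂ φ (ball 0 1))
    (hb : ∀ z ∈ ball (0:ℂ) 1, ‖φ z‖ ≤ 1) :
    ‖deriv φ 0‖ ≤ 1 - ‖φ 0‖ ^ 2 := by
  have h0 : (0:ℂ) ∈ ball (0:ℂ) 1 := mem_ball_self one_pos
  have ha1 : ‖φ 0‖ ≤ 1 := hb 0 h0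
  by_cases ha : ‖φ 0‖ < 1
  · set a := φ 0 with haa
    set σ : ℂ → ℂ := fun w => (w - a) * (1 - (starRingEnd ℂ) a * w)⁻¹ with hσdef
    have hden : ∀ w : ℂ, ‖w‖ ≤ 1 → (1 : ℂ) - (starRingEnd ℂ) a * w ≠ 0 := by
      intro w hw h
      rw [sub_eq_zero] at h
      have h2 : (1:ℝ) = ‖(starRingEnd ℂ) a * w‖ := by rw [← h]; simp
      rw [norm_mul, Complex.norm_conj] at h2
      nlinarith [norm_nonneg a, norm_nonneg w]
    have hφd : ∀ z ∈ ball (0:ℂ) 1, DifferentiableAt ℂ φ z := fun z hz =>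
      hφ.differentiableAt (isOpen_ball.mem_nhds hz)
    have hψd : DifferentiableOn ℂ (fun z => σ (φ z)) (ball 0 1) := by
      intro z hz
      refine DifferentiableAt.differentiableWithinAt ?_
      have hdφ := hφd z hz
      have hd1 : DifferentiableAt ℂ (fun z => φ z - a) z := hdφ.sub_const a
      have hd2 : DifferentiableAt ℂ (fun z => ((1:ℂ) - (starRingEnd ℂ) a * φ z)⁻¹) z := by
        refine DifferentiableAt.inv ?_ (hden _ (hb z hz))
        exact (hdφ.const_mul _).const_sub 1
      exact hd1.mul hd2
    have hψ0 : σ (φ 0) = 0 := by simp [hσdef, ← haa]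
    have hψb : ∀ z ∈ ball (0:ℂ) 1, ‖σ (φ z)‖ ≤ 1 := fun z hz =>
      mobius_le_one ha (hb z hz)
    have hRle : ∀ R : ℝ, 1 < R → ‖deriv (fun z => σ (φ z)) 0‖ ≤ R := by
      intro R hR
      have hmaps : Set.MapsTo (fun z => σ (φ z)) (ball 0 1) (ball (σ (φ 0)) R) := by
        intro z hz
        rw [hψ0, mem_ball_zero_iff]
        calc ‖σ (φ z)‖ ≤ 1 := hψb z hz
          _ < R := hR
      simpa using Complex.norm_deriv_le_div_of_mapsTo_ball hψd (hmaps.mono_right ball_subset_closedBall) one_pos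
    have hψle : ‖deriv (fun z => σ (φ z)) 0‖ ≤ 1 := by
      refine le_of_forall_gt_imp_ge_of_dense fun R hR => hRle R hR
    -- compute the derivative
    have hφ0 : HasDerivAt φ (deriv φ 0) 0 := (hφd 0 h0).hasDerivAt
    have hσa : HasDerivAt σ ((1 - (starRingEnd ℂ) a * a)⁻¹) a := by
      have hd1 : HasDerivAt (fun w : ℂ => w - a) 1 a := (hasDerivAt_id a).sub_const a
      have hd2 : HasDerivAt (fun w : ℂ => 1 - (starRingEnd ℂ) a * w) (-((starRingEnd ℂ) a)) a := by
        simpa using ((hasDerivAt_id a).const_mul ((starRingEnd ℂ) a)).const_sub 1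
      have hd3 := hd2.inv (hden a ha1)
      have hmul := hd1.mul hd3
      refine hmul.congr_deriv (Eq.symm ?_)
      simp
    have hψder : HasDerivAt (fun z => σ (φ z)) ((1 - (starRingEnd ℂ) a * a)⁻¹ * deriv φ 0) 0 := by
      have := hσa.comp 0 hφ0
      exact this
    have habs : ‖(1 - (starRingEnd ℂ) a * a)⁻¹ * deriv φ 0‖ ≤ 1 := by
      rw [← hψder.deriv]; exact hψle
    have hval : (1:ℂ) - (starRingEnd ℂ) a * a = ((1 - ‖a‖ ^ 2 : ℝ) : ℂ) := by
      rw [Complex.conj_mul']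
      push_cast
      norm_num
    rw [hval, norm_mul, norm_inv, Complex.norm_real, Real.norm_eq_abs] at habs
    have hpos : (0:ℝ) < 1 - ‖a‖ ^ 2 := by nlinarith [norm_nonneg a]
    rw [abs_of_pos hpos] at habs
    calc ‖deriv φ 0‖
        = (1 - ‖a‖ ^ 2) * ((1 - ‖a‖ ^ 2)⁻¹ * ‖deriv φ 0‖) := by
          field_simp
      _ ≤ (1 - ‖a‖ ^ 2) * 1 := by
          refine mul_le_mul_of_nonneg_left habs hpos.le
      _ = 1 - ‖φ 0‖ ^ 2 := by rw [mul_one]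
  · have hae : ‖φ 0‖ = 1 := le_antisymm ha1 (not_lt.1 ha)
    have hmax : IsLocalMax (norm ∘ φ) 0 := by
      filter_upwards [isOpen_ball.mem_nhds h0] with z hz
      have := hb z hz
      simp only [Function.comp, hae]; exact this
    have hdd : ∀ᶠ z in 𝓝 (0:ℂ), DifferentiableAt ℂ φ z := by
      filter_upwards [isOpen_ball.mem_nhds h0] with z hz
      exact hφ.differentiableAt (isOpen_ball.mem_nhds hz)
    have heq := Complex.eventually_eq_of_isLocalMax_norm hdd hmax
    have hder : deriv φ 0 = 0 := by
      have h1 : deriv φ 0 = deriv (fun _ : ℂ => φ 0) 0 := Filter.EventuallyEq.deriv_eq heq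
      simpa using h1
    rw [hder, hae]
    simp

theorem BTB_gamma2_bound (f : ℂ → ℂ) (hf : IsBTB f) :
    ‖(1/2) * (tCoeff f 3 - (tCoeff f 2)^2 / 2)‖ ≤ 1/12 := by
  obtain ⟨hfa, hf0, hf'0, hinj, ω, hωa, hω0, hωb, hfd⟩ := hf
  have h0 : (0:ℂ) ∈ ball (0:ℂ) 1 := mem_ball_self one_pos
  have hballn : ball (0:ℂ) 1 ∈ 𝓝 (0:ℂ) := isOpen_ball.mem_nhds h0
  have hωd : DifferentiableOn ℂ ω (ball 0 1) := hωa.differentiableOn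
  set φ := dslope ω 0 with hφdef
  have hφd : DifferentiableOn ℂ φ (ball 0 1) := (differentiableOn_dslope hballn).mpr hωd
  have hmaps : Set.MapsTo ω (ball 0 1) (ball (ω 0) 1) := by
    intro z hz; rw [hω0, mem_ball_zero_iff]; exact hωb z hz
  have hφb : ∀ z ∈ ball (0:ℂ) 1, ‖φ z‖ ≤ 1 := by
    intro z hz
    simpa using Complex.norm_dslope_le_div_of_mapsTo_ball hωd (hmaps.mono_right ball_subset_closedBall) hz
  set c1 := deriv ω 0 with hc1def
  have hφ0 : φ 0 = c1 := dslope_same ω 0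
  set c2 := deriv φ 0 with hc2def
  have hc2 : ‖c2‖ ≤ 1 - ‖c1‖ ^ 2 := by
    have h := schwarz_pick_coeff hφd hφb
    rwa [hφ0] at h
  -- ω z = z * φ z
  have hωeq : ω = fun z => z * φ z := by
    funext z
    rcases eq_or_ne z 0 with rfl | hz
    · simp [hω0]
    · rw [hφdef, dslope_of_ne ω hz, slope_def_field, hω0, sub_zero, sub_zero,
        mul_comm, div_mul_cancel₀ _ hz]
  have hφana : AnalyticOnNhd ℂ φ (ball 0 1) := hφd.analyticOnNhd isOpen_ball
  have hφat : ∀ z ∈ ball (0:ℂ) 1, HasDerivAt φ (deriv φ z) z := fun z hz =>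
    (hφd.differentiableAt (isOpen_ball.mem_nhds hz)).hasDerivAt
  have hωder : ∀ z ∈ ball (0:ℂ) 1, deriv ω z = φ z + z * deriv φ z := by
    intro z hz
    have h : HasDerivAt (fun y => y * φ y) (1 * φ z + z * deriv φ z) z :=
      (hasDerivAt_id z).mul (hφat z hz)
    rw [hωeq, h.deriv]
    ring
  have hDD : deriv (deriv ω) 0 = 2 * c2 := by
    have hev : deriv ω =ᶠ[𝓝 0] fun z => φ z + z * deriv φ z := by
      filter_upwards [hballn] with z hz using hωder z hz
    rw [hev.deriv_eq]
    have hφ'a : AnalyticAt ℂ (deriv φ) 0 := hφana.deriv 0 h0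
    have h1 : HasDerivAt (fun z => φ z + z * deriv φ z)
        (deriv φ 0 + (1 * deriv φ 0 + 0 * deriv (deriv φ) 0)) 0 :=
      (hφat 0 h0).add ((hasDerivAt_id 0).mul hφ'a.differentiableAt.hasDerivAt)
    rw [h1.deriv]
    ring
  -- neighborhood facts
  have hcosh0 : Complex.cosh 0 ≠ 0 := by rw [Complex.cosh_zero]; exact one_ne_zero
  have hs0 : (1 + Complex.tanh 0) ∈ Complex.slitPlane := by
    rw [Complex.tanh_zero, add_zero]
    exact Complex.one_mem_slitPlane
  have htanh_cont : ContinuousAt Complex.tanh 0 := by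
    have h : ContinuousAt (fun z => Complex.sinh z / Complex.cosh z) 0 :=
      Complex.continuous_sinh.continuousAt.div Complex.continuous_cosh.continuousAt hcosh0
    simpa [funext fun z => Complex.tanh_eq_sinh_div_cosh z] using h
  have hU : ∀ᶠ w in 𝓝 (0:ℂ), Complex.cosh w ≠ 0 ∧ (1 + Complex.tanh w) ∈ Complex.slitPlane := by
    have h1 : ∀ᶠ w in 𝓝 (0:ℂ), Complex.cosh w ≠ 0 :=
      Complex.continuous_cosh.continuousAt.eventually_ne hcosh0
    have h2 : ∀ᶠ w in 𝓝 (0:ℂ), (1 + Complex.tanh w) ∈ Complex.slitPlane := by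
      have hc : ContinuousAt (fun w => 1 + Complex.tanh w) 0 := continuousAt_const.add htanh_cont
      have := hc (Complex.isOpen_slitPlane.mem_nhds hs0)
      exact hc.eventually_mem (Complex.isOpen_slitPlane.mem_nhds hs0)
    exact h1.and h2
  have hV : ∀ᶠ z in 𝓝 (0:ℂ),
      Complex.cosh (ω z) ≠ 0 ∧ (1 + Complex.tanh (ω z)) ∈ Complex.slitPlane := by
    have hωcont : ContinuousAt ω 0 := (hωa 0 h0).continuousAt
    have ht := hωcont.tendsto
    rw [hω0] at ht
    exact ht.eventually hU
  have hE1 : deriv f =ᶠ[𝓝 0] fun z => gfun (ω z) := by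
    filter_upwards [hballn] with z hz
    exact hfd z hz
  have hωhas : ∀ z ∈ ball (0:ℂ) 1, HasDerivAt ω (deriv ω z) z := fun z hz =>
    (hωd.differentiableAt (isOpen_ball.mem_nhds hz)).hasDerivAt
  have hE2 : deriv (fun z => gfun (ω z)) =ᶠ[𝓝 0]
      fun z => gfun (ω z) * ((1 - Complex.tanh (ω z)) / 2) * deriv ω z := by
    filter_upwards [hballn, hV] with z hz hVz
    exact ((hasDerivAt_gfun hVz.1 hVz.2).comp z (hωhas z hz)).deriv
  have hg0 : gfun 0 = 1 := by
    unfold gfun psqrt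
    rw [Complex.tanh_zero, add_zero, Complex.log_one, mul_zero, Complex.exp_zero]
  have hc00 : Complex.cosh (ω 0) ≠ 0 := by rw [hω0]; exact hcosh0
  have hs00 : (1 + Complex.tanh (ω 0)) ∈ Complex.slitPlane := by rw [hω0]; exact hs0
  have hd2f : deriv (deriv f) 0 = c1 / 2 := by
    rw [hE1.deriv_eq]
    have h := (hasDerivAt_gfun hc00 hs00).comp 0 (hωhas 0 h0)
    have h' : HasDerivAt (fun z => gfun (ω z))
        (gfun (ω 0) * ((1 - Complex.tanh (ω 0)) / 2) * deriv ω 0) 0 := h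
    rw [h'.deriv, hω0, hg0, Complex.tanh_zero]
    ring
  have hGder : HasDerivAt (fun w => gfun w * ((1 - Complex.tanh w) / 2)) (-(1/4)) 0 := by
    have h1 : HasDerivAt gfun (gfun 0 * ((1 - Complex.tanh 0) / 2)) 0 := hasDerivAt_gfun hcosh0 hs0
    have h2 : HasDerivAt (fun w => (1 - Complex.tanh w) / 2) (-((Complex.cosh (0:ℂ) ^ 2)⁻¹) / 2) 0 :=
      ((hasDerivAt_tanh' hcosh0).const_sub 1).div_const 2
    have h3 := h1.mul h2
    refine h3.congr_deriv (Eq.symm ?_)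
    rw [hg0, Complex.tanh_zero, Complex.cosh_zero]
    norm_num
  have hd3f : deriv (deriv (deriv f)) 0 = -(c1^2)/4 + c2 := by
    have hEE : deriv (deriv f) =ᶠ[𝓝 0]
        fun z => gfun (ω z) * ((1 - Complex.tanh (ω z)) / 2) * deriv ω z := hE1.deriv.trans hE2
    rw [hEE.deriv_eq]
    have hGder0 : HasDerivAt (fun w => gfun w * ((1 - Complex.tanh w) / 2)) (-(1/4)) (ω 0) := by
      rw [hω0]; exact hGder
    have hGω : HasDerivAt (fun z => gfun (ω z) * ((1 - Complex.tanh (ω z)) / 2))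
        (-(1/4) * deriv ω 0) 0 := hGder0.comp 0 (hωhas 0 h0)
    have hω' : HasDerivAt (deriv ω) (deriv (deriv ω) 0) 0 :=
      ((hωa.deriv 0 h0)).differentiableAt.hasDerivAt
    have hprod := hGω.mul hω'
    rw [HasDerivAt.deriv (f := fun z => gfun (ω z) * ((1 - Complex.tanh (ω z)) / 2) * deriv ω z) hprod, hDD, hω0, hg0, Complex.tanh_zero]
    ring
  -- Taylor coefficients
  have hit2 : iteratedDeriv 2 f = deriv (deriv f) := by
    rw [iteratedDeriv_succ, iteratedDeriv_one]
  have hit3 : iteratedDeriv 3 f = deriv (deriv (deriv f)) := by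
    rw [iteratedDeriv_succ, hit2]
  have ht2 : tCoeff f 2 = c1 / 4 := by
    unfold tCoeff
    rw [hit2, hd2f, show ((Nat.factorial 2 : ℕ) : ℂ) = 2 by norm_num [Nat.factorial]]
    ring
  have ht3 : tCoeff f 3 = (-(c1^2)/4 + c2) / 6 := by
    unfold tCoeff
    rw [hit3, hd3f, show ((Nat.factorial 3 : ℕ) : ℂ) = 6 by norm_num [Nat.factorial]]
  rw [ht2, ht3]
  have heq : (1/2 : ℂ) * ((-(c1^2)/4 + c2) / 6 - (c1/4)^2 / 2) = c2/12 - (7/192) * c1^2 := by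
    ring
  rw [heq]
  have htri : ‖c2/12 - (7/192) * c1^2‖
      ≤ ‖c2‖ / 12 + (7/192) * ‖c1‖ ^ 2 := by
    calc ‖c2/12 - (7/192) * c1^2‖
        ≤ ‖c2/12‖ + ‖(7/192) * c1^2‖ := by
          exact norm_sub_le (c2/12) ((7/192 : ℂ) * c1^2)
      _ = ‖c2‖ / 12 + (7/192) * ‖c1‖ ^ 2 := by
          rw [norm_div, norm_mul, norm_pow, norm_div]
          norm_num [Complex.norm_ofNat]
  have hx2 : (0:ℝ) ≤ ‖c1‖ ^ 2 := sq_nonneg _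
  nlinarith [htri, hc2]
end

section
/- Let f be in the class BT_B with Taylor coefficients a_n, and let γ_3 = (1/2)(a_4 − a_2·a_3 + a_2³/3) be its third logarithmic coefficient. Then |γ_3| ≤ 1/16. -/
open Complex Metric

lemma derivEqOn {g₁ g₂ : ℂ → ℂ} (h : Set.EqOn g₁ g₂ (ball (0:ℂ) 1)) {z : ℂ}
    (hz : z ∈ ball (0:ℂ) 1) : deriv g₁ z = deriv g₂ z :=
  Filter.EventuallyEq.deriv_eq (Filter.eventuallyEq_of_mem (isOpen_ball.mem_nhds hz) h)

lemma analyticOnNhd_dslope {g : ℂ → ℂ} (hg : AnalyticOnNhd ℂ g (ball 0 1)) :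
    AnalyticOnNhd ℂ (dslope g 0) (ball 0 1) := by
  intro z hz
  rcases eq_or_ne z 0 with rfl | hne
  · obtain ⟨p, hp⟩ := hg 0 (by simp)
    exact ⟨p.fslope, hp.has_fpower_series_dslope_fslope⟩
  · have h1 : AnalyticAt ℂ (fun w => (g w - g 0) / (w - 0)) z :=
      ((hg z hz).sub analyticAt_const).div (analyticAt_id.sub analyticAt_const)
        (by simpa using hne)
    refine h1.congr ?_
    filter_upwards [isOpen_ne.mem_nhds hne] with w hw
    rw [dslope_of_ne _ hw, slope_def_field]

lemma normSq_mobius (a w : ℂ) :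
    normSq (1 - (starRingEnd ℂ) a * w) - normSq (w - a) = (1 - normSq a) * (1 - normSq w) := by
  simp only [normSq_apply, mul_re, mul_im, sub_re, sub_im, one_re, one_im, conj_re, conj_im]
  ring

lemma denom_ne {a w : ℂ} (ha : ‖a‖ ≤ 1) (hw : ‖w‖ < 1) : 1 - (starRingEnd ℂ) a * w ≠ 0 := by
  intro h
  have h1 : (1:ℂ) = (starRingEnd ℂ) a * w := by linear_combination h
  have h2 : ‖(starRingEnd ℂ) a * w‖ ≤ ‖w‖ := by
    rw [norm_mul, RCLike.norm_conj]
    nlinarith [norm_nonneg w]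
  rw [← h1, norm_one] at h2
  linarith

lemma mobius_lt {a w : ℂ} (ha : ‖a‖ < 1) (hw : ‖w‖ < 1) :
    ‖(w - a) * (1 - (starRingEnd ℂ) a * w)⁻¹‖ < 1 := by
  have hd := denom_ne ha.le hw
  have hD : 0 < ‖1 - (starRingEnd ℂ) a * w‖ := norm_pos_iff.mpr hd
  have key : ‖w - a‖ < ‖1 - (starRingEnd ℂ) a * w‖ := by
    have h1 := normSq_mobius a w
    have h2 : normSq (w - a) = ‖w - a‖^2 := by rw [normSq_eq_norm_sq]
    have h3 : normSq (1 - (starRingEnd ℂ) a * w) = ‖1 - (starRingEnd ℂ) a * w‖^2 := by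
      rw [normSq_eq_norm_sq]
    have h4 : normSq a = ‖a‖^2 := by rw [normSq_eq_norm_sq]
    have h5 : normSq w = ‖w‖^2 := by rw [normSq_eq_norm_sq]
    have ha2 : (0:ℝ) < 1 - ‖a‖^2 := by nlinarith [norm_nonneg a]
    have hw2 : (0:ℝ) < 1 - ‖w‖^2 := by nlinarith [norm_nonneg w]
    have h6 : ‖w - a‖^2 < ‖1 - (starRingEnd ℂ) a * w‖^2 := by nlinarith [mul_pos ha2 hw2]
    exact lt_of_pow_lt_pow_left₀ 2 (norm_nonneg _) h6
  rw [norm_mul, norm_inv, ← div_eq_mul_inv]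
  exact (div_lt_one hD).mpr key

lemma mem0 : (0:ℂ) ∈ ball (0:ℂ) 1 := mem_ball_self one_pos

lemma m_eq (a : ℂ) : 1 - (starRingEnd ℂ) a * a = ((1 - ‖a‖^2 : ℝ) : ℂ) := by
  have : (starRingEnd ℂ) a * a = (normSq a : ℂ) := by rw [mul_comm, mul_conj]
  rw [this, normSq_eq_norm_sq]
  push_cast
  ring

lemma schwarz_pick_center {χ : ℂ → ℂ} (hχ : AnalyticOnNhd ℂ χ (ball 0 1))
    (hle : ∀ z ∈ ball (0:ℂ) 1, ‖χ z‖ ≤ 1) : ‖deriv χ 0‖ ≤ 1 - ‖χ 0‖^2 := by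
  by_cases hmax : ∃ z₀ ∈ ball (0:ℂ) 1, 1 ≤ ‖χ z₀‖
  · obtain ⟨z₀, hz₀, hge⟩ := hmax
    have heq : ‖χ z₀‖ = 1 := le_antisymm (hle _ hz₀) hge
    have hconst : Set.EqOn χ (Function.const ℂ (χ z₀)) (ball 0 1) :=
      Complex.eqOn_of_isPreconnected_of_isMaxOn_norm (convex_ball (0:ℂ) 1).isPreconnected
        isOpen_ball hχ.differentiableOn hz₀
        (fun z hz => by simpa [heq] using hle z hz)
    have h1 : deriv χ 0 = 0 := by
      rw [derivEqOn hconst mem0]; exact deriv_const _ _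
    have h2 : ‖χ 0‖ = 1 := by rw [hconst mem0]; exact heq
    simp [h1, h2]
  · push_neg at hmax
    set b := χ 0 with hb_def
    have hb : ‖b‖ < 1 := hmax 0 mem0
    set τ : ℂ → ℂ := fun z => (χ z - b) * (1 - (starRingEnd ℂ) b * χ z)⁻¹ with hτ_def
    have hdnz : ∀ z ∈ ball (0:ℂ) 1, 1 - (starRingEnd ℂ) b * χ z ≠ 0 :=
      fun z hz => denom_ne hb.le (hmax z hz)
    have hτa : AnalyticOnNhd ℂ τ (ball 0 1) :=
      (hχ.sub analyticOnNhd_const).mul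
        ((analyticOnNhd_const.sub (analyticOnNhd_const.mul hχ)).inv hdnz)
    have hτ0 : τ 0 = 0 := by simp [hτ_def, ← hb_def]
    have hmaps : Set.MapsTo τ (ball (0:ℂ) 1) (ball (τ 0) 1) := by
      intro z hz
      rw [hτ0, mem_ball_zero_iff]
      exact mobius_lt hb (hmax z hz)
    have hsch : ‖deriv τ 0‖ ≤ 1 / 1 :=
      Complex.norm_deriv_le_div_of_mapsTo_ball hτa.differentiableOn (hmaps.mono_right ball_subset_closedBall) one_pos
    -- compute deriv τ 0
    have hχ0 : HasDerivAt χ (deriv χ 0) 0 := ((hχ 0 mem0).differentiableAt).hasDerivAt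
    have hden : HasDerivAt (fun z => 1 - (starRingEnd ℂ) b * χ z)
        (-((starRingEnd ℂ) b * deriv χ 0)) 0 := (hχ0.const_mul _).const_sub 1
    have hinv := hden.inv (hdnz 0 mem0)
    have hτd := (hχ0.sub_const b).mul hinv
    have hτval : deriv τ 0 = deriv χ 0 * (1 - (starRingEnd ℂ) b * b)⁻¹ := by
      rw [(show HasDerivAt τ _ 0 from hτd).deriv]
      simp [← hb_def]
    have hm := m_eq b
    have hμ : (0:ℝ) < 1 - ‖b‖^2 := by nlinarith [norm_nonneg b]
    have hmn : ‖(1 - (starRingEnd ℂ) b * b)⁻¹‖ = (1 - ‖b‖^2)⁻¹ := by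
      rw [hm, norm_inv, Complex.norm_real, Real.norm_eq_abs, abs_of_pos hμ]
    have h2 : ‖deriv χ 0‖ * (1 - ‖b‖^2)⁻¹ ≤ 1 := by
      rw [← hmn, ← norm_mul, ← hτval]; simpa using hsch
    have h3 := mul_le_mul_of_nonneg_right h2 hμ.le
    have h4 : ‖deriv χ 0‖ * (1 - ‖b‖^2)⁻¹ * (1 - ‖b‖^2) = ‖deriv χ 0‖ := by
      rw [mul_assoc, inv_mul_cancel₀ (ne_of_gt hμ), mul_one]
    rw [h4, one_mul] at h3
    exact h3

section SC2
variable {σ : ℂ → ℂ}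

lemma dslope_le_one (hσ : AnalyticOnNhd ℂ σ (ball 0 1)) (h0 : σ 0 = 0)
    (hlt : ∀ z ∈ ball (0:ℂ) 1, ‖σ z‖ < 1) :
    ∀ z ∈ ball (0:ℂ) 1, ‖dslope σ 0 z‖ ≤ 1 := by
  intro z hz
  have h := Complex.norm_dslope_le_div_of_mapsTo_ball (R₂ := 1) hσ.differentiableOn
    (fun w hw => by rw [h0, mem_closedBall_zero_iff]; exact (hlt w hw).le) hz
  simpa using h

lemma dslope_id (h0 : σ 0 = 0) : ∀ z, σ z = z * dslope σ 0 z := by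
  intro z
  have h := sub_smul_dslope σ 0 z
  rw [h0, sub_zero, sub_zero, smul_eq_mul] at h
  exact h.symm

lemma deriv_eq_dslope_form (hσ : AnalyticOnNhd ℂ σ (ball 0 1)) (h0 : σ 0 = 0) :
    Set.EqOn (deriv σ) (fun z => dslope σ 0 z + z * deriv (dslope σ 0) z) (ball (0:ℂ) 1) := by
  have hφa := analyticOnNhd_dslope hσ
  intro z hz
  have hσ' : σ = fun w => w * dslope σ 0 w := funext (dslope_id h0)
  have h := (hasDerivAt_id' (x := z)).mul ((hφa z hz).differentiableAt.hasDerivAt)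
  have hd := (show HasDerivAt (fun w => w * dslope σ 0 w) _ z from h).deriv
  rw [← hσ'] at hd
  rw [hd]; ring

lemma deriv2_eq_dslope_form (hσ : AnalyticOnNhd ℂ σ (ball 0 1)) (h0 : σ 0 = 0) :
    Set.EqOn (deriv (deriv σ))
      (fun z => 2 * deriv (dslope σ 0) z + z * deriv (deriv (dslope σ 0)) z) (ball (0:ℂ) 1) := by
  have hφa := analyticOnNhd_dslope hσ
  intro z hz
  rw [derivEqOn (deriv_eq_dslope_form hσ h0) hz]
  have h := ((hφa z hz).differentiableAt.hasDerivAt).add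
    ((hasDerivAt_id' (x := z)).mul ((hφa.deriv z hz).differentiableAt.hasDerivAt))
  rw [(show HasDerivAt (fun z => dslope σ 0 z + z * deriv (dslope σ 0) z) _ z from h).deriv]; ring

lemma deriv1_val (hσ : AnalyticOnNhd ℂ σ (ball 0 1)) (h0 : σ 0 = 0) :
    deriv σ 0 = dslope σ 0 0 := by
  have := deriv_eq_dslope_form hσ h0 mem0
  simpa using this

lemma deriv2_val (hσ : AnalyticOnNhd ℂ σ (ball 0 1)) (h0 : σ 0 = 0) :
    deriv (deriv σ) 0 = 2 * deriv (dslope σ 0) 0 := by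
  have := deriv2_eq_dslope_form hσ h0 mem0
  simpa using this

lemma deriv3_val (hσ : AnalyticOnNhd ℂ σ (ball 0 1)) (h0 : σ 0 = 0) :
    deriv (deriv (deriv σ)) 0 = 3 * deriv (deriv (dslope σ 0)) 0 := by
  have hφa := analyticOnNhd_dslope hσ
  rw [derivEqOn (deriv2_eq_dslope_form hσ h0) mem0]
  have h := (((hφa.deriv 0 mem0).differentiableAt.hasDerivAt).const_mul 2).add
    ((hasDerivAt_id' (x := (0:ℂ))).mul ((hφa.deriv.deriv 0 mem0).differentiableAt.hasDerivAt))
  rw [(show HasDerivAt (fun z => 2 * deriv (dslope σ 0) z + z * deriv (deriv (dslope σ 0)) z) _ 0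
    from h).deriv]; ring

lemma schwarz_coeff2 (hσ : AnalyticOnNhd ℂ σ (ball 0 1)) (h0 : σ 0 = 0)
    (hlt : ∀ z ∈ ball (0:ℂ) 1, ‖σ z‖ < 1) :
    ‖deriv σ 0‖ ≤ 1 ∧ ‖deriv (deriv σ) 0‖ ≤ 2 * (1 - ‖deriv σ 0‖^2) := by
  have hφa := analyticOnNhd_dslope hσ
  have hφle := dslope_le_one hσ h0 hlt
  have h1 := deriv1_val hσ h0
  have h2 := deriv2_val hσ h0
  have hsp := schwarz_pick_center hφa hφle
  constructor
  · rw [h1]; exact hφle 0 mem0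
  · rw [h1, h2, norm_mul]
    have hn2 : ‖(2:ℂ)‖ = 2 := by norm_num
    rw [hn2]
    linarith [hsp]

set_option maxHeartbeats 1000000 in
lemma schwarz_coeff3 {σ : ℂ → ℂ} (hσ : AnalyticOnNhd ℂ σ (ball 0 1)) (h0 : σ 0 = 0)
    (hlt : ∀ z ∈ ball (0:ℂ) 1, ‖σ z‖ < 1) :
    ‖deriv σ 0‖ ≤ 1 ∧ ‖deriv (deriv σ) 0‖ ≤ 2 * (1 - ‖deriv σ 0‖^2) ∧
    ‖deriv (deriv (deriv σ)) 0‖ * (1 + ‖deriv σ 0‖) ≤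
      6 * (1 - ‖deriv σ 0‖^2) * (1 + ‖deriv σ 0‖) - (3/2) * ‖deriv (deriv σ) 0‖^2 := by
  obtain ⟨hc1, hc2⟩ := schwarz_coeff2 hσ h0 hlt
  refine ⟨hc1, hc2, ?_⟩
  set φ := dslope σ 0 with hφ_def
  have hφa : AnalyticOnNhd ℂ φ (ball 0 1) := analyticOnNhd_dslope hσ
  have hφle := dslope_le_one hσ h0 hlt
  have h1 := deriv1_val hσ h0
  have h2 := deriv2_val hσ h0
  have h3 := deriv3_val hσ h0
  by_cases hmax : ∃ z₀ ∈ ball (0:ℂ) 1, 1 ≤ ‖φ z₀‖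
  · -- constant case
    obtain ⟨z₀, hz₀, hge⟩ := hmax
    have hconst : Set.EqOn φ (Function.const ℂ (φ z₀)) (ball 0 1) :=
      Complex.eqOn_of_isPreconnected_of_isMaxOn_norm (convex_ball (0:ℂ) 1).isPreconnected
        isOpen_ball hφa.differentiableOn hz₀
        (fun z hz => by
          have heq : ‖φ z₀‖ = 1 := le_antisymm (hφle z₀ hz₀) hge
          show ‖φ z‖ ≤ ‖φ z₀‖
          rw [heq]
          exact hφle z hz)
    have hd0 : Set.EqOn (deriv φ) (fun _ => (0:ℂ)) (ball 0 1) := by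
      intro z hz
      rw [derivEqOn hconst hz]
      exact deriv_const z (φ z₀)
    have hdd0 : deriv (deriv φ) 0 = 0 := by
      rw [derivEqOn hd0 mem0]
      simp
    have hq0 : deriv (deriv σ) 0 = 0 := by rw [h2, hd0 mem0]; ring
    have hr0 : deriv (deriv (deriv σ)) 0 = 0 := by rw [h3, hdd0]; ring
    rw [hq0, hr0]
    have hx1 : ‖deriv σ 0‖ ≤ 1 := hc1
    have hx0 : 0 ≤ ‖deriv σ 0‖ := norm_nonneg _
    simp only [norm_zero]
    nlinarith
  · push_neg at hmax
    set a := φ 0 with ha_def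
    have ha : ‖a‖ < 1 := hmax 0 mem0
    have hμ : (0:ℝ) < 1 - ‖a‖^2 := by nlinarith [norm_nonneg a]
    set ψ : ℂ → ℂ := fun z => (φ z - a) * (1 - (starRingEnd ℂ) a * φ z)⁻¹ with hψ_def
    have hdnz : ∀ z ∈ ball (0:ℂ) 1, 1 - (starRingEnd ℂ) a * φ z ≠ 0 :=
      fun z hz => denom_ne ha.le (hmax z hz)
    have hψa : AnalyticOnNhd ℂ ψ (ball 0 1) :=
      (hφa.sub analyticOnNhd_const).mul
        ((analyticOnNhd_const.sub (analyticOnNhd_const.mul hφa)).inv hdnz)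
    have hψ0 : ψ 0 = 0 := by simp [hψ_def, ← ha_def]
    have hψlt : ∀ z ∈ ball (0:ℂ) 1, ‖ψ z‖ < 1 := fun z hz => mobius_lt ha (hmax z hz)
    obtain ⟨hA1, hA2⟩ := schwarz_coeff2 hψa hψ0 hψlt
    -- derivative of ψ on the ball
    have hdψ : Set.EqOn (deriv ψ)
        (fun z => deriv φ z * (1 - (starRingEnd ℂ) a * φ z)⁻¹ +
          (φ z - a) * ((starRingEnd ℂ) a * deriv φ z * ((1 - (starRingEnd ℂ) a * φ z)^2)⁻¹))
        (ball (0:ℂ) 1) := by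
      intro z hz
      have hφz : HasDerivAt φ (deriv φ z) z := (hφa z hz).differentiableAt.hasDerivAt
      have hden : HasDerivAt (fun w => 1 - (starRingEnd ℂ) a * φ w)
          (-((starRingEnd ℂ) a * deriv φ z)) z := (hφz.const_mul _).const_sub 1
      have hinv := hden.inv (hdnz z hz)
      have hψd := (hφz.sub_const a).mul hinv
      rw [(show HasDerivAt ψ _ z from hψd).deriv]
      simp only [Pi.inv_apply]
      have := hdnz z hz
      field_simp
    -- value of deriv ψ at 0
    have e1 : deriv ψ 0 = deriv φ 0 * (((1 - ‖a‖^2 : ℝ)) : ℂ)⁻¹ := by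
      rw [hdψ mem0]
      simp only [← ha_def, sub_self, zero_mul, mul_zero, add_zero, zero_add]
      rw [m_eq a]
    -- second derivative of ψ at 0
    have hφ00 : HasDerivAt φ (deriv φ 0) 0 := (hφa 0 mem0).differentiableAt.hasDerivAt
    have hφ'0 : HasDerivAt (deriv φ) (deriv (deriv φ) 0) 0 :=
      (hφa.deriv 0 mem0).differentiableAt.hasDerivAt
    have hden0 : HasDerivAt (fun w => 1 - (starRingEnd ℂ) a * φ w)
        (-((starRingEnd ℂ) a * deriv φ 0)) 0 := (hφ00.const_mul _).const_sub 1
    have hinv0 := hden0.inv (hdnz 0 mem0)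
    have hterm1 := hφ'0.mul hinv0
    have hpow := hden0.pow 2
    have hpinv := hpow.inv (pow_ne_zero 2 (hdnz 0 mem0))
    have hG := ((hφ'0.const_mul ((starRingEnd ℂ) a)).mul hpinv)
    have hterm2 := (hφ00.sub_const a).mul hG
    have hsum := hterm1.add hterm2
    have e2 : deriv (deriv ψ) 0 =
        deriv (deriv φ) 0 * (((1 - ‖a‖^2 : ℝ)) : ℂ)⁻¹ +
        2 * (starRingEnd ℂ) a * (deriv φ 0)^2 * ((((1 - ‖a‖^2 : ℝ)) : ℂ)^2)⁻¹ := by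
      rw [derivEqOn hdψ mem0, (show HasDerivAt (fun z => deriv φ z * (1 - (starRingEnd ℂ) a * φ z)⁻¹ +
          (φ z - a) * ((starRingEnd ℂ) a * deriv φ z * ((1 - (starRingEnd ℂ) a * φ z)^2)⁻¹)) _ 0
          from hsum).deriv]
      simp only [Pi.mul_apply, Pi.inv_apply, Pi.pow_apply]
      rw [← ha_def, ← m_eq a]
      have hm0 : (1 - (starRingEnd ℂ) a * a) ≠ 0 := hdnz 0 mem0
      field_simp
      ring
    -- arithmetic
    set X := ‖a‖ with hX_def
    have hμ' : (0:ℝ) < 1 - X^2 := hμ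
    have hnc : ‖((1 - X^2 : ℝ) : ℂ)‖ = 1 - X^2 := by
      rw [Complex.norm_real, Real.norm_eq_abs, abs_of_pos hμ']
    set P := deriv φ 0 with hP_def
    set Q := deriv (deriv φ) 0 with hQ_def
    have hP : ‖deriv ψ 0‖ = ‖P‖ * (1 - X^2)⁻¹ := by
      rw [e1, norm_mul, norm_inv, hnc]
    have hPle : ‖P‖ ≤ 1 - X^2 := by
      have h9 := hA1
      rw [hP] at h9
      have h10 := mul_le_mul_of_nonneg_right h9 hμ'.le
      rw [mul_assoc, inv_mul_cancel₀ hμ'.ne', mul_one, one_mul] at h10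
      exact h10
    have h6 : ‖2*(starRingEnd ℂ) a*P^2*((((1 - X^2 : ℝ)):ℂ)^2)⁻¹‖
        = 2*X*‖P‖^2*((1 - X^2)^2)⁻¹ := by
      rw [norm_mul, norm_mul, norm_mul, norm_inv, norm_pow, norm_pow, hnc, RCLike.norm_conj,
        ← hX_def]
      norm_num
    have h7 : Q * ((((1 - X^2:ℝ)):ℂ))⁻¹ =
        deriv (deriv ψ) 0 - 2*(starRingEnd ℂ) a*P^2*((((1 - X^2 : ℝ)):ℂ)^2)⁻¹ := by
      rw [e2]; ring
    have htri : ‖Q‖ * (1 - X^2)⁻¹ ≤ ‖deriv (deriv ψ) 0‖ + 2*X*‖P‖^2*((1 - X^2)^2)⁻¹ := by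
      calc ‖Q‖ * (1 - X^2)⁻¹ = ‖Q * ((((1 - X^2:ℝ)):ℂ))⁻¹‖ := by
            rw [norm_mul, norm_inv, hnc]
        _ = ‖deriv (deriv ψ) 0 - 2*(starRingEnd ℂ) a*P^2*((((1 - X^2 : ℝ)):ℂ)^2)⁻¹‖ := by
            rw [h7]
        _ ≤ ‖deriv (deriv ψ) 0‖ + ‖2*(starRingEnd ℂ) a*P^2*((((1 - X^2 : ℝ)):ℂ)^2)⁻¹‖ :=
            norm_sub_le _ _
        _ = ‖deriv (deriv ψ) 0‖ + 2*X*‖P‖^2*((1 - X^2)^2)⁻¹ := by rw [h6]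
    have hψ'' : ‖deriv (deriv ψ) 0‖ ≤ 2 * (1 - (‖P‖ * (1 - X^2)⁻¹)^2) := by
      rw [← hP]; exact hA2
    have h9 : ‖Q‖ * (1 - X^2)⁻¹ ≤
        2 * (1 - (‖P‖ * (1 - X^2)⁻¹)^2) + 2*X*‖P‖^2*((1 - X^2)^2)⁻¹ := by
      linarith
    have key2 : ‖Q‖ * (1 - X^2) ≤ 2*(1 - X^2)^2 - 2*‖P‖^2 + 2*X*‖P‖^2 := by
      have h10 := mul_le_mul_of_nonneg_right h9 (by positivity : (0:ℝ) ≤ (1 - X^2)^2)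
      have hne := hμ'.ne'
      have e3 : ‖Q‖ * (1 - X^2)⁻¹ * (1 - X^2)^2 = ‖Q‖ * (1 - X^2) := by
        field_simp
        try ring
      have e4 : (2 * (1 - (‖P‖ * (1 - X^2)⁻¹)^2) + 2*X*‖P‖^2*((1 - X^2)^2)⁻¹) * (1 - X^2)^2
          = 2*(1 - X^2)^2 - 2*‖P‖^2 + 2*X*‖P‖^2 := by
        field_simp
        try ring
      rw [e3, e4] at h10
      exact h10
    -- conclude
    have h1' : deriv σ 0 = a := by
      rw [h1]
    have h2' : deriv (deriv σ) 0 = 2 * P := by rw [h2, hP_def, hφ_def]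
    have h3' : deriv (deriv (deriv σ)) 0 = 3 * Q := by rw [h3, hQ_def, hφ_def]
    rw [h1', h2', h3', norm_mul, norm_mul]
    have hn3 : ‖(3:ℂ)‖ = 3 := by norm_num
    have hn2 : ‖(2:ℂ)‖ = 2 := by norm_num
    rw [hn2, hn3]
    have h1X : (0:ℝ) < 1 - X := by nlinarith [norm_nonneg a]
    apply le_of_mul_le_mul_right _ h1X
    nlinarith [key2, norm_nonneg P, norm_nonneg Q, norm_nonneg a]

lemma cosh_ne_zero_of_small {u : ℂ} (hu : ‖u‖ < 1) : Complex.cosh u ≠ 0 := by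
  intro h
  rw [← Complex.cos_mul_I, Complex.cos_eq_zero_iff] at h
  obtain ⟨k, hk⟩ := h
  have h3 : (2 * (k:ℂ) + 1) * (Real.pi:ℂ) / 2 = (((2*(k:ℝ)+1) * Real.pi / 2 : ℝ) : ℂ) := by
    push_cast; ring
  rw [h3] at hk
  have habs := congrArg norm hk
  rw [norm_mul, Complex.norm_I, mul_one, Complex.norm_real, Real.norm_eq_abs] at habs
  have hk0 : (2*k+1 : ℤ) ≠ 0 := by omega
  have hk1 : (1:ℝ) ≤ |2*(k:ℝ)+1| := by
    have := Int.one_le_abs hk0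
    calc (1:ℝ) ≤ |(2*k+1 : ℤ)| := by exact_mod_cast this
      _ = |2*(k:ℝ)+1| := by push_cast; ring_nf
  have hpi := Real.pi_gt_three
  have : (1:ℝ) < |(2*(k:ℝ)+1) * Real.pi / 2| := by
    rw [abs_div, abs_mul, abs_of_pos (by linarith : (0:ℝ) < Real.pi)]
    rw [show |(2:ℝ)| = 2 by norm_num]
    calc (1:ℝ) < 1 * (3/2) := by norm_num
      _ ≤ |2*(k:ℝ)+1| * (Real.pi / 2) := by
          apply mul_le_mul hk1 (by linarith) (by linarith) (by linarith)
      _ = |2*(k:ℝ)+1| * Real.pi / 2 := by ring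
  rw [← habs] at this
  linarith

theorem BTB_gamma3_bound (f : ℂ → ℂ) (hf : IsBTB f) :
    ‖(1/2) * (tCoeff f 4 - tCoeff f 2 * tCoeff f 3 + (tCoeff f 2)^3 / 3)‖ ≤ 1/16 := by
  obtain ⟨hfa, hf0, hf1, -, ω, hωa, hω0, hωabs, hfd⟩ := hf
  have hωlt : ∀ z ∈ ball (0:ℂ) 1, ‖ω z‖ < 1 := by
    intro z hz; exact hωabs z hz
  set F := deriv f with hF_def
  have hFa : AnalyticOnNhd ℂ F (ball 0 1) := hfa.deriv
  have hF0 : F 0 = 1 := hf1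
  -- the square identity
  have hsq : Set.EqOn (fun z => F z^2 * Complex.cosh (ω z)) (fun z => Complex.exp (ω z))
      (ball (0:ℂ) 1) := by
    intro z hz
    have hc := cosh_ne_zero_of_small (hωlt z hz)
    have hw : (1 : ℂ) + Complex.tanh (ω z) = Complex.exp (ω z) / Complex.cosh (ω z) := by
      rw [Complex.tanh_eq_sinh_div_cosh, ← Complex.cosh_add_sinh]
      field_simp
    have hwne : (1 : ℂ) + Complex.tanh (ω z) ≠ 0 := by
      rw [hw]; exact div_ne_zero (Complex.exp_ne_zero _) hc
    have hFz : F z = psqrt (1 + Complex.tanh (ω z)) := hfd z hz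
    have hsq2 : F z ^ 2 = 1 + Complex.tanh (ω z) := by
      rw [hFz, psqrt, sq, ← Complex.exp_add]
      rw [show (1/2 : ℂ) * Complex.log (1 + Complex.tanh (ω z)) +
        (1/2) * Complex.log (1 + Complex.tanh (ω z)) = Complex.log (1 + Complex.tanh (ω z))
        from by ring]
      exact Complex.exp_log hwne
    show F z^2 * Complex.cosh (ω z) = Complex.exp (ω z)
    rw [hsq2, hw]
    field_simp
  -- abbreviations
  set w1 := deriv ω with hw1_def
  set w2 := deriv w1 with hw2_def
  set w3 := deriv w2 with hw3_def
  set F1 := deriv F with hF1_def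
  set F2 := deriv F1 with hF2_def
  set F3 := deriv F2 with hF3_def
  have hw1a : AnalyticOnNhd ℂ w1 (ball 0 1) := hωa.deriv
  have hw2a : AnalyticOnNhd ℂ w2 (ball 0 1) := hw1a.deriv
  have hF1a : AnalyticOnNhd ℂ F1 (ball 0 1) := hFa.deriv
  have hF2a : AnalyticOnNhd ℂ F2 (ball 0 1) := hF1a.deriv
  have hDw : ∀ z ∈ ball (0:ℂ) 1, HasDerivAt ω (w1 z) z :=
    fun z hz => (hωa z hz).differentiableAt.hasDerivAt
  have hDw1 : ∀ z ∈ ball (0:ℂ) 1, HasDerivAt w1 (w2 z) z :=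
    fun z hz => (hw1a z hz).differentiableAt.hasDerivAt
  have hDw2 : ∀ z ∈ ball (0:ℂ) 1, HasDerivAt w2 (w3 z) z :=
    fun z hz => (hw2a z hz).differentiableAt.hasDerivAt
  have hDF : ∀ z ∈ ball (0:ℂ) 1, HasDerivAt F (F1 z) z :=
    fun z hz => (hFa z hz).differentiableAt.hasDerivAt
  have hDF1 : ∀ z ∈ ball (0:ℂ) 1, HasDerivAt F1 (F2 z) z :=
    fun z hz => (hF1a z hz).differentiableAt.hasDerivAt
  have hDF2 : ∀ z ∈ ball (0:ℂ) 1, HasDerivAt F2 (F3 z) z :=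
    fun z hz => (hF2a z hz).differentiableAt.hasDerivAt
  -- step 1
  have step1 : Set.EqOn
      (fun z => 2*F z*F1 z*Complex.cosh (ω z) + F z^2*(Complex.sinh (ω z)*w1 z))
      (fun z => Complex.exp (ω z)*w1 z) (ball (0:ℂ) 1) := by
    intro z hz
    have hL : HasDerivAt (fun y => F y^2 * Complex.cosh (ω y))
        (2*F z*F1 z*Complex.cosh (ω z) + F z^2*(Complex.sinh (ω z)*w1 z)) z := by
      have h := ((hDF z hz).pow 2).mul ((hDw z hz).ccosh)
      refine h.congr_deriv ?_
      push_cast [Pi.mul_apply, Pi.pow_apply]; ring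
    have hR : HasDerivAt (fun y => Complex.exp (ω y)) (Complex.exp (ω z)*w1 z) z :=
      (hDw z hz).cexp
    have h := derivEqOn hsq hz
    rw [hL.deriv, hR.deriv] at h
    exact h
  -- step 2
  have step2 : Set.EqOn
      (fun z => 2*F1 z^2*Complex.cosh (ω z) + 2*F z*F2 z*Complex.cosh (ω z)
        + 4*F z*F1 z*Complex.sinh (ω z)*w1 z + F z^2*Complex.cosh (ω z)*w1 z^2
        + F z^2*Complex.sinh (ω z)*w2 z)
      (fun z => Complex.exp (ω z)*w1 z^2 + Complex.exp (ω z)*w2 z) (ball (0:ℂ) 1) := by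
    intro z hz
    have hL : HasDerivAt (fun y => 2*F y*F1 y*Complex.cosh (ω y)
        + F y^2*(Complex.sinh (ω y)*w1 y))
        (2*F1 z^2*Complex.cosh (ω z) + 2*F z*F2 z*Complex.cosh (ω z)
        + 4*F z*F1 z*Complex.sinh (ω z)*w1 z + F z^2*Complex.cosh (ω z)*w1 z^2
        + F z^2*Complex.sinh (ω z)*w2 z) z := by
      have hA := ((((hasDerivAt_const z (2:ℂ)).mul (hDF z hz)).mul (hDF1 z hz)).mul
        ((hDw z hz).ccosh))
      have hB := ((hDF z hz).pow 2).mul (((hDw z hz).csinh).mul (hDw1 z hz))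
      have h := hA.add hB
      refine h.congr_deriv ?_
      push_cast [Pi.mul_apply, Pi.pow_apply]; ring
    have hR : HasDerivAt (fun y => Complex.exp (ω y)*w1 y)
        (Complex.exp (ω z)*w1 z^2 + Complex.exp (ω z)*w2 z) z := by
      have h := ((hDw z hz).cexp).mul (hDw1 z hz)
      refine h.congr_deriv ?_
      push_cast [Pi.mul_apply, Pi.pow_apply]; ring
    have h := derivEqOn step1 hz
    rw [hL.deriv, hR.deriv] at h
    exact h
  -- evaluate at 0
  have E1 := step1 mem0
  have E2 := step2 mem0
  have E3 : deriv (fun z => 2*F1 z^2*Complex.cosh (ω z) + 2*F z*F2 z*Complex.cosh (ω z)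
        + 4*F z*F1 z*Complex.sinh (ω z)*w1 z + F z^2*Complex.cosh (ω z)*w1 z^2
        + F z^2*Complex.sinh (ω z)*w2 z) 0
      = deriv (fun z => Complex.exp (ω z)*w1 z^2 + Complex.exp (ω z)*w2 z) 0 :=
    derivEqOn step2 mem0
  -- third derivative identities
  have hL3 : HasDerivAt (fun z => 2*F1 z^2*Complex.cosh (ω z) + 2*F z*F2 z*Complex.cosh (ω z)
        + 4*F z*F1 z*Complex.sinh (ω z)*w1 z + F z^2*Complex.cosh (ω z)*w1 z^2
        + F z^2*Complex.sinh (ω z)*w2 z)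
      (6*F1 0*F2 0 + 2*F3 0 + 6*F1 0*w1 0^2 + 3*w1 0*w2 0) 0 := by
    have h1 := ((hasDerivAt_const (0:ℂ) (2:ℂ)).mul ((hDF1 0 mem0).pow 2)).mul
      ((hDw 0 mem0).ccosh)
    have h2 := (((hasDerivAt_const (0:ℂ) (2:ℂ)).mul (hDF 0 mem0)).mul (hDF2 0 mem0)).mul
      ((hDw 0 mem0).ccosh)
    have h3 := (((((hasDerivAt_const (0:ℂ) (4:ℂ)).mul (hDF 0 mem0)).mul (hDF1 0 mem0)).mul
      ((hDw 0 mem0).csinh)).mul (hDw1 0 mem0))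
    have h4 := (((hDF 0 mem0).pow 2).mul ((hDw 0 mem0).ccosh)).mul ((hDw1 0 mem0).pow 2)
    have h5 := (((hDF 0 mem0).pow 2).mul ((hDw 0 mem0).csinh)).mul (hDw2 0 mem0)
    have h := (((h1.add h2).add h3).add h4).add h5
    refine h.congr_deriv ?_
    beta_reduce
    rw [hω0, hF0]
    push_cast [Pi.mul_apply, Pi.pow_apply, hω0, hF0]
    simp [Complex.cosh_zero, Complex.sinh_zero]
    ring
  have hR3 : HasDerivAt (fun z => Complex.exp (ω z)*w1 z^2 + Complex.exp (ω z)*w2 z)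
      (w1 0^3 + 3*w1 0*w2 0 + w3 0) 0 := by
    have h1 := ((hDw 0 mem0).cexp).mul ((hDw1 0 mem0).pow 2)
    have h2 := ((hDw 0 mem0).cexp).mul (hDw2 0 mem0)
    have h := h1.add h2
    refine h.congr_deriv ?_
    beta_reduce
    rw [hω0]
    push_cast [Pi.mul_apply, Pi.pow_apply, hω0]
    simp [Complex.exp_zero]
    ring
  rw [hL3.deriv, hR3.deriv] at E3
  simp only [hω0, hF0, Complex.cosh_zero, Complex.sinh_zero, Complex.exp_zero, one_pow,
    mul_one, one_mul] at E1 E2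
  -- solve for F-derivatives
  have hA1 : F1 0 = w1 0 / 2 := by linear_combination E1 / 2
  have hA2 : F2 0 = w2 0 / 2 - w1 0^2/4 := by
    linear_combination E2/2 - (F1 0/2 + w1 0/4) * E1
  have hA3 : F3 0 = w3 0/2 - (3/4)*(w1 0)*(w2 0) - (5/8)*(w1 0)^3 := by
    linear_combination E3/2 - (3*F1 0)*hA2 - ((3/2)*(w2 0) + (9/4)*(w1 0)^2)*hA1
  -- tCoeff values
  have ht2 : tCoeff f 2 = F1 0 / 2 := by
    have h : iteratedDeriv 2 f 0 = deriv (deriv f) 0 := by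
      rw [iteratedDeriv_succ, iteratedDeriv_one]
    rw [tCoeff, h]
    norm_num
    rfl
  have ht3 : tCoeff f 3 = F2 0 / 6 := by
    have h : iteratedDeriv 3 f 0 = deriv (deriv (deriv f)) 0 := by
      rw [iteratedDeriv_succ, iteratedDeriv_succ, iteratedDeriv_one]
    rw [tCoeff, h]
    norm_num [Nat.factorial]
    rfl
  have ht4 : tCoeff f 4 = F3 0 / 24 := by
    have h : iteratedDeriv 4 f 0 = deriv (deriv (deriv (deriv f))) 0 := by
      rw [iteratedDeriv_succ, iteratedDeriv_succ, iteratedDeriv_succ, iteratedDeriv_one]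
    rw [tCoeff, h]
    norm_num [Nat.factorial]
    rfl
  have hval : (1/2 : ℂ) * (tCoeff f 4 - tCoeff f 2 * tCoeff f 3 + (tCoeff f 2)^3 / 3)
      = w3 0/96 - 5*(w1 0*w2 0)/192 - (w1 0)^3/192 := by
    rw [ht2, ht3, ht4, hA1, hA2, hA3]; ring
  rw [hval]
  -- Schwarz coefficient bounds
  obtain ⟨hs1, hs2, hs3⟩ := schwarz_coeff3 hωa hω0 hωlt
  rw [← hw1_def] at hs1 hs2 hs3
  rw [← hw2_def] at hs2 hs3
  rw [← hw3_def] at hs3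
  -- triangle inequality
  have htr : ‖w3 0/96 - 5*(w1 0*w2 0)/192 - (w1 0)^3/192‖
      ≤ ‖w3 0‖/96 + 5*(‖w1 0‖*‖w2 0‖)/192 + ‖w1 0‖^3/192 := by
    calc ‖w3 0/96 - 5*(w1 0*w2 0)/192 - (w1 0)^3/192‖
        ≤ ‖w3 0/96 - 5*(w1 0*w2 0)/192‖ + ‖(w1 0)^3/192‖ := norm_sub_le _ _
      _ ≤ ‖w3 0/96‖ + ‖5*(w1 0*w2 0)/192‖ + ‖(w1 0)^3/192‖ := by
          linarith [norm_sub_le (w3 0/96) (5*(w1 0*w2 0)/192)]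
      _ = ‖w3 0‖/96 + 5*(‖w1 0‖*‖w2 0‖)/192 + ‖w1 0‖^3/192 := by
          rw [norm_div, norm_div, norm_div, norm_mul, norm_mul, norm_pow]
          norm_num
  refine htr.trans ?_
  set X := ‖w1 0‖ with hX
  set Y := ‖w2 0‖ with hY
  set R := ‖w3 0‖ with hR
  have hX0 : 0 ≤ X := norm_nonneg _
  have hY0 : 0 ≤ Y := norm_nonneg _
  have hR0 : 0 ≤ R := norm_nonneg _
  have h1p : (0:ℝ) < 1 + X := by linarith
  nlinarith [hs1, hs2, hs3, sq_nonneg (6*Y - 5*X*(1+X)), mul_nonneg (mul_nonneg hX0 hX0) hX0,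
    mul_nonneg hX0 hY0, mul_nonneg (mul_nonneg hX0 hX0) (sub_nonneg.mpr hs1),
    mul_pos h1p h1p, mul_nonneg (mul_nonneg (mul_nonneg hX0 hX0) hX0) (sub_nonneg.mpr hs1)]
end SC2
end

section
/- Let f be in the class BT_B with Taylor coefficients a_n, and let Γ_1 = −a_2/2 be the first logarithmic coefficient of the inverse function of f. Then |Γ_1| ≤ 1/8. -/
open Complex Metric

lemma hasDerivAt_tanh_zero : HasDerivAt Complex.tanh 1 0 := by
  have h : HasDerivAt (fun z => Complex.sinh z / Complex.cosh z)
      ((Complex.cosh 0 * Complex.cosh 0 - Complex.sinh 0 * Complex.sinh 0)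
        / Complex.cosh 0 ^ 2) 0 :=
    (Complex.hasDerivAt_sinh 0).div (Complex.hasDerivAt_cosh 0) (by simp)
  simp only [Complex.cosh_zero, Complex.sinh_zero] at h
  have h' : HasDerivAt (fun z => Complex.sinh z / Complex.cosh z) 1 0 := by
    convert h using 1; norm_num
  refine h'.congr_of_eventuallyEq ?_
  filter_upwards with z using (Complex.tanh_eq_sinh_div_cosh z)

lemma hasDerivAt_psqrt_one : HasDerivAt psqrt (1/2) 1 := by
  have hlog : HasDerivAt Complex.log 1 1 := by
    simpa using Complex.hasDerivAt_log (by simp [Complex.slitPlane] : (1:ℂ) ∈ Complex.slitPlane)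
  have h1 : HasDerivAt (fun w => (1/2 : ℂ) * Complex.log w) (1/2) 1 := by
    simpa using hlog.const_mul (1/2 : ℂ)
  have h2 : HasDerivAt (fun w => Complex.exp ((1/2 : ℂ) * Complex.log w))
      (Complex.exp ((1/2 : ℂ) * Complex.log 1) * (1/2)) 1 :=
    (Complex.hasDerivAt_exp _).comp 1 h1
  have h3 : HasDerivAt psqrt (Complex.exp ((1/2 : ℂ) * Complex.log 1) * (1/2)) 1 := h2
  simpa [Complex.log_one] using h3

theorem BTB_Gamma1_bound (f : ℂ → ℂ) (hf : IsBTB f) :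
    ‖-(tCoeff f 2) / 2‖ ≤ 1/8 := by
  obtain ⟨hfa, hf0, hf'0, hinj, ω, hωa, hω0, hωlt, hderiv⟩ := hf
  have h0mem : (0:ℂ) ∈ ball (0:ℂ) 1 := by simp
  have hωd : HasDerivAt ω (deriv ω 0) 0 := ((hωa 0 h0mem).differentiableAt).hasDerivAt
  -- inner function z ↦ 1 + tanh (ω z)
  have htanh' : HasDerivAt Complex.tanh 1 (ω 0) := by rw [hω0]; exact hasDerivAt_tanh_zero
  have hinner : HasDerivAt (fun z => 1 + Complex.tanh (ω z)) (deriv ω 0) 0 := by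
    have h := (htanh'.comp 0 hωd).const_add 1
    simpa [Function.comp] using h
  have hval : (1 : ℂ) + Complex.tanh (ω 0) = 1 := by simp [hω0]
  have hps : HasDerivAt psqrt (1/2) (1 + Complex.tanh (ω 0)) := by
    rw [hval]; exact hasDerivAt_psqrt_one
  have hcomp : HasDerivAt (fun z => psqrt (1 + Complex.tanh (ω z)))
      ((1/2) * deriv ω 0) 0 := by
    have h := hps.comp 0 hinner
    exact h
  -- deriv f agrees with the composite near 0
  have heq : deriv f =ᶠ[nhds (0:ℂ)] fun z => psqrt (1 + Complex.tanh (ω z)) := by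
    filter_upwards [isOpen_ball.mem_nhds h0mem] with z hz using hderiv z hz
  have hd2 : deriv (deriv f) 0 = (1/2) * deriv ω 0 := by
    rw [heq.deriv_eq]; exact hcomp.deriv
  -- Schwarz lemma for ω
  have hSch : ‖deriv ω 0‖ ≤ 1 := by
    refine Complex.norm_deriv_le_one_of_mapsTo_ball
      (fun z hz => ((hωa z hz).differentiableAt).differentiableWithinAt)
      (fun z hz => ?_) one_pos
    simpa [hω0, mem_closedBall_zero_iff] using (hωlt z hz).le
  have htc : tCoeff f 2 = deriv (deriv f) 0 / 2 := by
    simp [tCoeff, iteratedDeriv_succ, iteratedDeriv_one]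
  rw [htc, hd2]
  have habs : ‖(-(1/2 * deriv ω 0) / 2 / 2 : ℂ)‖ = ‖deriv ω 0‖ / 8 := by
    have h : (-(1/2 * deriv ω 0) / 2 / 2 : ℂ) = deriv ω 0 / (-8) := by ring
    rw [h, norm_div, norm_neg]
    norm_num
  have h2 : (-(1/2 * deriv ω 0 / 2) / 2 : ℂ) = -(1/2 * deriv ω 0) / 2 / 2 := by ring
  rw [h2, habs]
  linarith
end

section
/- Let f be in the class BT_B with Taylor coefficients a_n, and let Γ_2 = −(1/2)(a_3 − (3/2)a_2²) be the second logarithmic coefficient of the inverse function of f. Then |Γ_2| ≤ 1/12. -/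
open Complex Metric
open Filter Topology


lemma tanh_hasDerivAt {w : ℂ} (h : Complex.cosh w ≠ 0) :
    HasDerivAt Complex.tanh (1 - Complex.tanh w ^ 2) w := by
  have h1 : HasDerivAt (fun z => Complex.sinh z / Complex.cosh z)
      ((Complex.cosh w * Complex.cosh w - Complex.sinh w * Complex.sinh w) / Complex.cosh w ^ 2) w :=
    (Complex.hasDerivAt_sinh w).div (Complex.hasDerivAt_cosh w) h
  have h2 : (fun z => Complex.sinh z / Complex.cosh z) = Complex.tanh := by
    funext z; rw [Complex.tanh_eq_sinh_div_cosh]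
  rw [h2] at h1
  convert h1 using 1
  have h3 := Complex.cosh_sq_sub_sinh_sq w
  rw [Complex.tanh_eq_sinh_div_cosh]
  field_simp

lemma tanh_slit {w : ℂ} (h : ‖Complex.tanh w‖ < 1/2) :
    1 + Complex.tanh w ∈ Complex.slitPlane := by
  rw [Complex.mem_slitPlane_iff]
  left
  have := Complex.abs_re_le_norm (Complex.tanh w)
  have h2 : |(Complex.tanh w).re| < 1/2 := lt_of_le_of_lt this h
  have := abs_lt.mp h2
  simp only [Complex.add_re, Complex.one_re]
  linarith [this.1]

noncomputable def Gfun (w : ℂ) : ℂ := psqrt (1 + Complex.tanh w)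
noncomputable def Gfun₁ (w : ℂ) : ℂ := Gfun w * (1 - Complex.tanh w) / 2
noncomputable def Gfun₂ (w : ℂ) : ℂ :=
  (Gfun₁ w * (1 - Complex.tanh w) + Gfun w * (-(1 - Complex.tanh w ^ 2))) / 2

lemma Gfun_hasDerivAt {w : ℂ} (h1 : ‖Complex.tanh w‖ < 1/2)
    (h2 : Complex.cosh w ≠ 0) : HasDerivAt Gfun (Gfun₁ w) w := by
  have ht := tanh_hasDerivAt h2
  have h0 : HasDerivAt (fun z => (1:ℂ) + Complex.tanh z) (1 - Complex.tanh w ^ 2) w :=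
    ht.const_add 1
  have hl : HasDerivAt (fun z => Complex.log (1 + Complex.tanh z))
      ((1 - Complex.tanh w ^ 2) / (1 + Complex.tanh w)) w := h0.clog (tanh_slit h1)
  have hm := hl.const_mul (1/2 : ℂ)
  have he := hm.cexp
  have hne : (1:ℂ) + Complex.tanh w ≠ 0 := Complex.slitPlane_ne_zero (tanh_slit h1)
  have hsq : Complex.tanh w ^ 2 - 1 = (Complex.tanh w - 1) * (Complex.tanh w + 1) := by ring
  refine he.congr_deriv ?_
  symm
  show Gfun w * (1 - Complex.tanh w) / 2 = _
  rw [show Complex.exp ((1/2 : ℂ) * Complex.log (1 + Complex.tanh w)) = Gfun w from rfl]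
  field_simp
  ring

lemma Gfun₁_hasDerivAt {w : ℂ} (h1 : ‖Complex.tanh w‖ < 1/2)
    (h2 : Complex.cosh w ≠ 0) : HasDerivAt Gfun₁ (Gfun₂ w) w := by
  have := ((Gfun_hasDerivAt h1 h2).mul ((tanh_hasDerivAt h2).const_sub 1)).div_const 2
  exact this

lemma Gfun_zero : Gfun 0 = 1 := by simp [Gfun, psqrt]
lemma Gfun₁_zero : Gfun₁ 0 = 1/2 := by simp [Gfun₁, Gfun_zero]
lemma Gfun₂_zero : Gfun₂ 0 = -(1/4) := by
  simp [Gfun₂, Gfun_zero, Gfun₁_zero]; norm_num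
lemma normSq_moebius (a b : ℂ) :
    Complex.normSq (1 - (starRingEnd ℂ) b * a) - Complex.normSq (a - b)
      = (1 - Complex.normSq a) * (1 - Complex.normSq b) := by
  simp only [Complex.normSq_apply, Complex.sub_re, Complex.sub_im, Complex.mul_re,
    Complex.mul_im, Complex.one_re, Complex.one_im, Complex.conj_re, Complex.conj_im]
  ring

lemma schwarz_coeff {ω : ℂ → ℂ} (hωa : AnalyticOnNhd ℂ ω (ball 0 1)) (hω0 : ω 0 = 0)
    (hωlt : ∀ z ∈ ball (0:ℂ) 1, ‖ω z‖ < 1) :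
    ‖dslope ω 0 0‖ ≤ 1 ∧
      ‖deriv (dslope ω 0) 0‖ ≤ 1 - ‖dslope ω 0 0‖ ^ 2 := by
  set φ := dslope ω 0 with hφdef
  have hmem : ball (0:ℂ) 1 ∈ 𝓝 (0:ℂ) := isOpen_ball.mem_nhds (mem_ball_self one_pos)
  have hφd : DifferentiableOn ℂ φ (ball 0 1) :=
    (differentiableOn_dslope hmem).mpr hωa.differentiableOn
  have hmaps : Set.MapsTo ω (ball 0 1) (ball (ω 0) 1) := by
    intro z hz; rw [hω0]; exact mem_ball_zero_iff.2 (hωlt z hz)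
  have hφle : ∀ z ∈ ball (0:ℂ) 1, ‖φ z‖ ≤ 1 := by
    intro z hz
    have := Complex.norm_dslope_le_div_of_mapsTo_ball hωa.differentiableOn (hmaps.mono_right ball_subset_closedBall) hz
    simpa using this
  have hb₀ : ‖φ 0‖ ≤ 1 := hφle 0 (mem_ball_self one_pos)
  refine ⟨hb₀, ?_⟩
  set b₀ := φ 0 with hb₀def
  rcases lt_or_eq_of_le hb₀ with hlt | heq
  · -- |b₀| < 1 : Möbius trick
    have hden : ∀ z ∈ ball (0:ℂ) 1, (1 : ℂ) - (starRingEnd ℂ) b₀ * φ z ≠ 0 := by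
      intro z hz h
      have h1 : ‖(starRingEnd ℂ) b₀ * φ z‖ < 1 := by
        rw [norm_mul, Complex.norm_conj]
        calc ‖b₀‖ * ‖φ z‖ ≤ ‖b₀‖ * 1 :=
              mul_le_mul_of_nonneg_left (hφle z hz) (norm_nonneg _)
          _ < 1 := by simpa using hlt
      have : (starRingEnd ℂ) b₀ * φ z = 1 := by linear_combination -h
      rw [this] at h1; simp at h1
    set ψ : ℂ → ℂ := fun z => (φ z - b₀) / (1 - (starRingEnd ℂ) b₀ * φ z) with hψdef
    have hψd : DifferentiableOn ℂ ψ (ball 0 1) := by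
      apply DifferentiableOn.div
      · exact hφd.sub_const b₀
      · exact (differentiableOn_const 1).sub ((differentiableOn_const _).mul hφd)
      · exact hden
    have hψ0 : ψ 0 = 0 := by simp [hψdef, hb₀def]
    have hψle : ∀ z ∈ ball (0:ℂ) 1, ‖ψ z‖ ≤ 1 := by
      intro z hz
      have hkey := normSq_moebius (φ z) b₀
      have h1 : Complex.normSq (φ z) ≤ 1 := by
        have := hφle z hz
        rw [← Complex.sq_norm]; nlinarith [norm_nonneg (φ z)]
      have h2 : Complex.normSq b₀ ≤ 1 := by
        rw [← Complex.sq_norm]; nlinarith [norm_nonneg b₀]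
      have h3 : Complex.normSq (φ z - b₀) ≤ Complex.normSq (1 - (starRingEnd ℂ) b₀ * φ z) := by
        nlinarith
      have h4 : ‖φ z - b₀‖ ≤ ‖1 - (starRingEnd ℂ) b₀ * φ z‖ := by
        rw [Complex.norm_def, Complex.norm_def]
        exact Real.sqrt_le_sqrt h3
      rw [hψdef]
      simp only [norm_div]
      rcases eq_or_ne (‖1 - (starRingEnd ℂ) b₀ * φ z‖) 0 with h0 | h0
      · exact absurd ((norm_eq_zero).mp h0) (hden z hz)
      · rw [div_le_one (lt_of_le_of_ne (norm_nonneg _) (Ne.symm h0))]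
        exact h4
    -- Schwarz lemma for ψ
    have hψderiv_le : ‖deriv ψ 0‖ ≤ 1 := by
      apply le_of_forall_pos_le_add
      intro ε hε
      have hmaps' : Set.MapsTo ψ (ball 0 1) (ball (ψ 0) (1 + ε)) := by
        intro z hz
        rw [hψ0, mem_ball_zero_iff]
        exact lt_of_le_of_lt (hψle z hz) (by linarith)
      have := Complex.norm_deriv_le_div_of_mapsTo_ball hψd (hmaps'.mono_right ball_subset_closedBall) one_pos
      simpa using this
    -- compute deriv ψ 0
    have hφ0d : HasDerivAt φ (deriv φ 0) 0 :=
      (hφd.differentiableAt hmem).hasDerivAt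
    have hdenne : (1 : ℂ) - (starRingEnd ℂ) b₀ * φ 0 ≠ 0 :=
      hden 0 (mem_ball_self one_pos)
    have hD : HasDerivAt ψ
        ((deriv φ 0 * (1 - (starRingEnd ℂ) b₀ * φ 0) -
          (φ 0 - b₀) * (-((starRingEnd ℂ) b₀ * deriv φ 0))) /
          (1 - (starRingEnd ℂ) b₀ * φ 0) ^ 2) 0 := by
      exact (hφ0d.sub_const b₀).div ((hφ0d.const_mul ((starRingEnd ℂ) b₀)).const_sub 1) hdenne
    have hψ0d : deriv ψ 0 = deriv φ 0 / (1 - (starRingEnd ℂ) b₀ * b₀) := by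
      rw [hD.deriv, ← hb₀def]
      have hd' : (1:ℂ) - (starRingEnd ℂ) b₀ * b₀ ≠ 0 := hdenne
      field_simp
      ring
    have hns : ((Complex.normSq b₀ : ℝ) : ℂ) = (starRingEnd ℂ) b₀ * b₀ := by
      rw [← Complex.normSq_eq_conj_mul_self]
    have hnslt : Complex.normSq b₀ < 1 := by
      rw [← Complex.sq_norm]; nlinarith [norm_nonneg b₀]
    have habs_den : ‖1 - (starRingEnd ℂ) b₀ * b₀‖ = 1 - Complex.normSq b₀ := by
      rw [← hns]
      rw [show (1 : ℂ) - ((Complex.normSq b₀ : ℝ) : ℂ) = (((1 - Complex.normSq b₀ : ℝ)) : ℂ) by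
        push_cast; ring]
      rw [Complex.norm_of_nonneg (by linarith : (0:ℝ) ≤ 1 - Complex.normSq b₀)]
    have : ‖deriv φ 0‖ = ‖deriv ψ 0‖ * (1 - Complex.normSq b₀) := by
      rw [hψ0d, norm_div, habs_den]
      rw [div_mul_cancel₀ _ (by linarith : (1:ℝ) - Complex.normSq b₀ ≠ 0)]
    rw [this]
    have h2 : ‖deriv ψ 0‖ * (1 - Complex.normSq b₀) ≤ 1 - Complex.normSq b₀ := by
      nlinarith [norm_nonneg (deriv ψ 0)]
    exact le_of_le_of_eq h2 (by rw [Complex.sq_norm])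
  · -- |b₀| = 1 : maximum principle, φ constant
    have hmax : IsMaxOn (norm ∘ φ) (ball 0 1) 0 := by
      intro z hz
      simp only [Function.comp_apply, Set.mem_setOf_eq]
      exact le_of_le_of_eq (hφle z hz) heq.symm
    have hEq := Complex.eqOn_of_isPreconnected_of_isMaxOn_norm
      (convex_ball (0:ℂ) 1).isPreconnected isOpen_ball hφd (mem_ball_self one_pos) hmax
    have hfeq : φ =ᶠ[𝓝 (0:ℂ)] fun _ => φ 0 := by
      filter_upwards [hmem] with z hz using hEq hz
    have : deriv φ 0 = 0 := by
      rw [hfeq.deriv_eq]; simp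
    rw [this]
    simp [heq]

theorem BTB_Gamma2_bound (f : ℂ → ℂ) (hf : IsBTB f) :
    ‖-(1/2) * (tCoeff f 3 - (3/2) * (tCoeff f 2)^2)‖ ≤ 1/12 := by
  obtain ⟨hfa, hf0, hfd1, hinj, ω, hωa, hω0, hωlt, hfeq⟩ := hf
  set φ := dslope ω 0 with hφdef
  set b₀ := φ 0 with hb₀def
  set b₁ := deriv φ 0 with hb₁def
  have hone : (0:ℂ) ∈ ball (0:ℂ) 1 := mem_ball_self one_pos
  have hmem1 : ball (0:ℂ) 1 ∈ 𝓝 (0:ℂ) := isOpen_ball.mem_nhds hone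
  have hφd : DifferentiableOn ℂ φ (ball 0 1) :=
    (differentiableOn_dslope hmem1).mpr hωa.differentiableOn
  have hφa : AnalyticOnNhd ℂ φ (ball 0 1) := hφd.analyticOnNhd isOpen_ball
  have hωφ : ω = fun z => z * φ z := by
    funext z
    have h := sub_smul_dslope ω 0 z
    simp only [sub_zero, hω0, smul_eq_mul] at h
    exact h.symm
  have hωd : ∀ z ∈ ball (0:ℂ) 1, HasDerivAt ω (φ z + z * deriv φ z) z := by
    intro z hz
    have hφz : DifferentiableAt ℂ φ z := hφd.differentiableAt (isOpen_ball.mem_nhds hz)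
    have h := (hasDerivAt_id z).fun_mul hφz.hasDerivAt
    rw [hωφ]
    simpa using h
  have htc : ContinuousAt Complex.tanh 0 := by
    have hts : Complex.tanh = fun z => Complex.sinh z / Complex.cosh z :=
      funext fun z => Complex.tanh_eq_sinh_div_cosh z
    rw [hts]
    exact (Complex.continuous_sinh.continuousAt).div
      (Complex.continuous_cosh.continuousAt) (by simp)
  have hωc : ContinuousAt ω 0 := (hωa 0 hone).continuousAt
  have h1 : ∀ᶠ z in 𝓝 (0:ℂ), ‖Complex.tanh (ω z)‖ < 1/2 := by
    have htc' : ContinuousAt Complex.tanh (ω 0) := by rw [hω0]; exact htc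
    have h : ContinuousAt (fun z => ‖Complex.tanh (ω z)‖) 0 :=
      continuous_norm.continuousAt.comp (htc'.comp hωc)
    have ht : Filter.Tendsto (fun z => ‖Complex.tanh (ω z)‖) (𝓝 0) (𝓝 0) := by
      have h0 : ‖Complex.tanh (ω 0)‖ = 0 := by simp [hω0]
      rw [ContinuousAt, h0] at h; exact h
    exact ht.eventually_lt_const (by norm_num)
  have h2 : ∀ᶠ z in 𝓝 (0:ℂ), Complex.cosh (ω z) ≠ 0 := by
    have h : ContinuousAt (fun z => Complex.cosh (ω z)) 0 :=
      Complex.continuous_cosh.continuousAt.comp hωc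
    have ht : Filter.Tendsto (fun z => Complex.cosh (ω z)) (𝓝 0) (𝓝 1) := by
      have h0 : Complex.cosh (ω 0) = 1 := by simp [hω0]
      rw [ContinuousAt, h0] at h; exact h
    exact ht.eventually_ne (by norm_num)
  have hev := (h1.and h2).and (isOpen_ball.eventually_mem hone)
  obtain ⟨ρ, hρ0, hρ⟩ := Metric.eventually_nhds_iff_ball.mp hev
  have hρmem : (0:ℂ) ∈ ball (0:ℂ) ρ := mem_ball_self hρ0
  have hfd2 : ∀ z ∈ ball (0:ℂ) ρ,
      HasDerivAt (deriv f) (Gfun₁ (ω z) * (φ z + z * deriv φ z)) z := by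
    intro z hz
    obtain ⟨⟨hz1, hz2⟩, hz3⟩ := hρ z hz
    have hG := (Gfun_hasDerivAt hz1 hz2).comp z (hωd z hz3)
    apply hG.congr_of_eventuallyEq
    filter_upwards [isOpen_ball.eventually_mem hz] with y hy
    exact hfeq y (hρ y hy).2
  have hit2 : iteratedDeriv 2 f 0 = b₀ / 2 := by
    rw [iteratedDeriv_succ, iteratedDeriv_one]
    have h := (hfd2 0 hρmem).deriv
    rw [hω0, Gfun₁_zero] at h
    rw [h]; ring
  have hd2ev : deriv (deriv f) =ᶠ[𝓝 (0:ℂ)]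
      fun z => Gfun₁ (ω z) * (φ z + z * deriv φ z) := by
    filter_upwards [isOpen_ball.eventually_mem hρmem] with z hz using (hfd2 z hz).deriv
  have hφd0 : DifferentiableAt ℂ φ 0 := hφd.differentiableAt hmem1
  have hφ'd0 : DifferentiableAt ℂ (deriv φ) 0 := ((hφa.deriv) 0 hone).differentiableAt
  have hA : HasDerivAt (fun z => Gfun₁ (ω z)) (Gfun₂ (ω 0) * (φ 0 + 0 * deriv φ 0)) 0 := by
    obtain ⟨⟨hc1, hc2⟩, _⟩ := hρ 0 hρmem
    exact (Gfun₁_hasDerivAt hc1 hc2).comp 0 (hωd 0 hone)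
  have hB : HasDerivAt (fun z => φ z + z * deriv φ z)
      (deriv φ 0 + (1 * deriv φ 0 + 0 * deriv (deriv φ) 0)) 0 :=
    hφd0.hasDerivAt.add ((hasDerivAt_id 0).mul hφ'd0.hasDerivAt)
  have hC := hA.fun_mul hB
  have hit3 : iteratedDeriv 3 f 0 = -(b₀^2)/4 + b₁ := by
    rw [iteratedDeriv_succ, iteratedDeriv_succ, iteratedDeriv_one]
    rw [hd2ev.deriv_eq, hC.deriv]
    simp only [hω0, Gfun₁_zero, Gfun₂_zero]
    ring
  have ht2 : tCoeff f 2 = b₀ / 4 := by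
    rw [tCoeff, hit2]
    norm_num [Nat.factorial]
    ring
  have ht3 : tCoeff f 3 = (-(b₀^2)/4 + b₁) / 6 := by
    rw [tCoeff, hit3]
    norm_num [Nat.factorial]
  have hval : -(1/2 : ℂ) * (tCoeff f 3 - (3/2) * (tCoeff f 2)^2)
      = -b₁/12 + (13/192) * b₀^2 := by
    rw [ht2, ht3]; ring
  rw [hval]
  have hb0 : ‖b₀‖ ≤ 1 := (schwarz_coeff hωa hω0 hωlt).1
  have hb1 : ‖b₁‖ ≤ 1 - ‖b₀‖ ^ 2 := (schwarz_coeff hωa hω0 hωlt).2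
  have e1 : ‖-b₁/12‖ = ‖b₁‖ / 12 := by
    rw [norm_div, norm_neg]
    norm_num
  have e2 : ‖(13/192 : ℂ) * b₀^2‖ = (13/192) * ‖b₀‖ ^ 2 := by
    rw [norm_mul, norm_pow, norm_div]
    norm_num
  calc ‖-b₁/12 + (13/192) * b₀^2‖
      ≤ ‖-b₁/12‖ + ‖(13/192 : ℂ) * b₀^2‖ := norm_add_le _ _
    _ = ‖b₁‖ / 12 + (13/192) * ‖b₀‖ ^ 2 := by rw [e1, e2]
    _ ≤ 1/12 := by nlinarith [norm_nonneg b₀, sq_nonneg (‖b₀‖)]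
end

section
/- Let f be in the class BT_B with Taylor coefficients a_n. Then the Zalcman functional satisfies |a_2·a_3 − a_4| ≤ 1/8. -/
open Complex Metric

/-! ### Auxiliary lemmas -/

lemma BTB_aux_one_add_tanh_ne_zero (w : ℂ) : 1 + Complex.tanh w ≠ 0 := by
  rw [show Complex.tanh w = Complex.sinh w / Complex.cosh w from Complex.tanh_eq_sinh_div_cosh w]
  rcases eq_or_ne (Complex.cosh w) 0 with h | h
  · simp [h]
  · intro hc
    have h2 : Complex.sinh w = - Complex.cosh w := by
      field_simp at hc
      linear_combination hc
    have := Complex.cosh_add_sinh w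
    rw [h2] at this
    simp at this
    exact Complex.exp_ne_zero w this.symm

lemma BTB_aux_psqrt_sq {w : ℂ} (hw : w ≠ 0) : psqrt w ^ 2 = w := by
  rw [psqrt, ← Complex.exp_nat_mul, show (2:ℕ) * ((1/2 : ℂ) * Complex.log w) = Complex.log w by
    push_cast; ring]
  exact Complex.exp_log hw

lemma BTB_aux_cosh_ne_zero {w : ℂ} (hw : ‖w‖ < 1) : Complex.cosh w ≠ 0 := by
  intro h
  rw [← Complex.cos_mul_I, Complex.cos_eq_zero_iff] at h
  obtain ⟨k, hk⟩ := h
  have h0 : ‖w * I‖ = ‖w‖ := by simp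
  rw [hk] at h0
  have habs : ‖(2 * (k:ℂ) + 1) * (Real.pi:ℂ) / 2‖ = |2*(k:ℝ)+1| * Real.pi / 2 := by
    rw [show (2 * (k:ℂ) + 1) * (Real.pi:ℂ) / 2 = (((2*(k:ℝ)+1) * Real.pi / 2 : ℝ) : ℂ) by
      push_cast; ring]
    rw [Complex.norm_real, Real.norm_eq_abs, abs_div, abs_mul, _root_.abs_of_nonneg Real.pi_pos.le]
    norm_num
  rw [habs] at h0
  have h1 : (1:ℝ) ≤ |2*(k:ℝ)+1| := by
    rcases le_or_gt 0 (k:ℝ) with h | h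
    · rw [_root_.abs_of_nonneg (by linarith)]; linarith
    · have : (k:ℝ) ≤ -1 := by exact_mod_cast Int.le_of_lt_add_one (by exact_mod_cast h)
      rw [_root_.abs_of_nonpos (by linarith)]; linarith
  have hpi := Real.pi_gt_three
  nlinarith [hw]

lemma BTB_aux_hasDerivAt_tanh {w : ℂ} (hw : Complex.cosh w ≠ 0) :
    HasDerivAt Complex.tanh (1 - Complex.tanh w ^ 2) w := by
  have h : Complex.tanh = fun z => Complex.sinh z / Complex.cosh z := by
    funext z; exact Complex.tanh_eq_sinh_div_cosh z
  rw [h]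
  have hd := (Complex.hasDerivAt_sinh w).fun_div (Complex.hasDerivAt_cosh w) hw
  refine hd.congr_deriv (Eq.symm ?_)
  simp only
  field_simp

lemma BTB_aux_deriv_congr {s : Set ℂ} (hs : IsOpen s) {u v : ℂ → ℂ}
    (h : ∀ z ∈ s, u z = v z) {z : ℂ} (hz : z ∈ s) : deriv u z = deriv v z := by
  apply Filter.EventuallyEq.deriv_eq
  filter_upwards [hs.mem_nhds hz] with x hx using h x hx

/-- The coefficient relations between `f` and the Schwarz function `ω`. -/
lemma BTB_coeff_relations (f ω : ℂ → ℂ)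
    (hfa : AnalyticOnNhd ℂ f (ball 0 1)) (hωa : AnalyticOnNhd ℂ ω (ball 0 1))
    (hωb : ∀ z ∈ ball (0:ℂ) 1, ‖ω z‖ < 1)
    (hd : ∀ z ∈ ball (0:ℂ) 1, deriv f z = psqrt (1 + Complex.tanh (ω z)))
    (hd0 : deriv f 0 = 1) :
    deriv ω 0 = 2 * deriv (deriv f) 0 ∧
    deriv (deriv ω) 0 = 2 * (deriv (deriv f) 0)^2 + 2 * deriv (deriv (deriv f)) 0 ∧
    deriv (deriv (deriv ω)) 0 =
      6 * deriv (deriv f) 0 * deriv (deriv (deriv f)) 0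
      + 2 * deriv (deriv (deriv (deriv f))) 0 + 16 * (deriv (deriv f) 0)^3 := by
  set B : Set ℂ := ball 0 1 with hBdef
  have hB : IsOpen B := isOpen_ball
  have h0B : (0:ℂ) ∈ B := by simp [hBdef]
  set h : ℂ → ℂ := fun z => deriv f z * deriv f z with hhdef
  have AF1 : AnalyticOnNhd ℂ (deriv f) B := hfa.deriv
  have AF2 : AnalyticOnNhd ℂ (deriv (deriv f)) B := AF1.deriv
  have AF3 : AnalyticOnNhd ℂ (deriv (deriv (deriv f))) B := AF2.deriv
  have Ah : AnalyticOnNhd ℂ h B := AF1.mul AF1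
  have Ah1 : AnalyticOnNhd ℂ (deriv h) B := Ah.deriv
  have Ah2 : AnalyticOnNhd ℂ (deriv (deriv h)) B := Ah1.deriv
  have Aw1 : AnalyticOnNhd ℂ (deriv ω) B := hωa.deriv
  have Aw2 : AnalyticOnNhd ℂ (deriv (deriv ω)) B := Aw1.deriv
  have dF1 : ∀ z ∈ B, DifferentiableAt ℂ (deriv f) z := fun z hz => (AF1 z hz).differentiableAt
  have dF2 : ∀ z ∈ B, DifferentiableAt ℂ (deriv (deriv f)) z := fun z hz => (AF2 z hz).differentiableAt
  have dF3 : ∀ z ∈ B, DifferentiableAt ℂ (deriv (deriv (deriv f))) z := fun z hz => (AF3 z hz).differentiableAt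
  have dh : ∀ z ∈ B, DifferentiableAt ℂ h z := fun z hz => (Ah z hz).differentiableAt
  have dh1 : ∀ z ∈ B, DifferentiableAt ℂ (deriv h) z := fun z hz => (Ah1 z hz).differentiableAt
  have dh2 : ∀ z ∈ B, DifferentiableAt ℂ (deriv (deriv h)) z := fun z hz => (Ah2 z hz).differentiableAt
  have dw : ∀ z ∈ B, DifferentiableAt ℂ ω z := fun z hz => (hωa z hz).differentiableAt
  have dw1 : ∀ z ∈ B, DifferentiableAt ℂ (deriv ω) z := fun z hz => (Aw1 z hz).differentiableAt
  have dw2 : ∀ z ∈ B, DifferentiableAt ℂ (deriv (deriv ω)) z := fun z hz => (Aw2 z hz).differentiableAt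
  have h_eq : ∀ z ∈ B, h z = 1 + Complex.tanh (ω z) := by
    intro z hz
    calc h z = psqrt (1 + Complex.tanh (ω z)) ^ 2 := by
          rw [hhdef]; simp only [hd z hz]; ring
    _ = 1 + Complex.tanh (ω z) := BTB_aux_psqrt_sq (BTB_aux_one_add_tanh_ne_zero (ω z))
  have h00 : h 0 = 1 := by rw [hhdef]; simp [hd0]
  have E1 : ∀ z ∈ B, deriv h z = h z * (2 - h z) * deriv ω z := by
    intro z hz
    have step1 : deriv h z = deriv (fun z => 1 + Complex.tanh (ω z)) z :=
      BTB_aux_deriv_congr hB h_eq hz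
    have hco : Complex.cosh (ω z) ≠ 0 := BTB_aux_cosh_ne_zero (hωb z hz)
    have hcomp : HasDerivAt (fun z => Complex.tanh (ω z))
        ((1 - Complex.tanh (ω z)^2) * deriv ω z) z :=
      (BTB_aux_hasDerivAt_tanh hco).comp z (dw z hz).hasDerivAt
    have step2 : deriv (fun z => 1 + Complex.tanh (ω z)) z
        = (1 - Complex.tanh (ω z)^2) * deriv ω z := by
      rw [deriv_const_add]
      exact hcomp.deriv
    rw [step1, step2]
    have ht : Complex.tanh (ω z) = h z - 1 := by rw [h_eq z hz]; ring
    rw [ht]; ring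
  have Ef1 : ∀ z ∈ B, deriv h z =
      deriv (deriv f) z * deriv f z + deriv f z * deriv (deriv f) z := by
    intro z hz
    rw [hhdef]
    exact deriv_mul (dF1 z hz) (dF1 z hz)
  have hval1 : deriv h 0 = 2 * deriv (deriv f) 0 := by
    rw [Ef1 0 h0B, hd0]; ring
  have E2 : ∀ z ∈ B, deriv (deriv h) z =
      (deriv h z * (2 - h z) + h z * (-(deriv h z))) * deriv ω z
      + h z * (2 - h z) * deriv (deriv ω) z := by
    intro z hz
    have := BTB_aux_deriv_congr hB E1 hz
    rw [this]
    have d2h : ∀ y ∈ B, DifferentiableAt ℂ (fun z => 2 - h z) y := fun y hy =>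
      (differentiableAt_const (2:ℂ)).sub (dh y hy)
    rw [deriv_fun_mul ((dh z hz).fun_mul (d2h z hz)) (dw1 z hz),
        deriv_fun_mul (dh z hz) (d2h z hz), deriv_const_sub]
  have Ef2 : ∀ z ∈ B, deriv (deriv h) z =
      (deriv (deriv (deriv f)) z * deriv f z + deriv (deriv f) z * deriv (deriv f) z)
      + (deriv (deriv f) z * deriv (deriv f) z + deriv f z * deriv (deriv (deriv f)) z) := by
    intro z hz
    have := BTB_aux_deriv_congr hB Ef1 hz
    rw [this, deriv_fun_add ((dF2 z hz).fun_mul (dF1 z hz)) ((dF1 z hz).fun_mul (dF2 z hz)),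
        deriv_fun_mul (dF2 z hz) (dF1 z hz), deriv_fun_mul (dF1 z hz) (dF2 z hz)]
  have hval2 : deriv (deriv h) 0 =
      2 * deriv (deriv (deriv f)) 0 + 2 * (deriv (deriv f) 0)^2 := by
    rw [Ef2 0 h0B, hd0]; ring
  have c1 : deriv ω 0 = 2 * deriv (deriv f) 0 := by
    have := E1 0 h0B
    rw [h00, hval1] at this
    have : 2 * deriv (deriv f) 0 = 1 * (2 - 1) * deriv ω 0 := this
    rw [this]; ring
  have c2 : deriv (deriv ω) 0 = 2 * (deriv (deriv f) 0)^2 + 2 * deriv (deriv (deriv f)) 0 := by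
    have := E2 0 h0B
    rw [h00, hval1, hval2] at this
    linear_combination -this
  refine ⟨c1, c2, ?_⟩
  have Ef3 : deriv (deriv (deriv h)) 0 =
      6 * deriv (deriv f) 0 * deriv (deriv (deriv f)) 0
      + 2 * deriv (deriv (deriv (deriv f))) 0 := by
    have := BTB_aux_deriv_congr hB Ef2 h0B
    rw [this]
    have AF4 : DifferentiableAt ℂ (deriv (deriv (deriv (deriv f)))) 0 :=
      ((AF3.deriv) 0 h0B).differentiableAt
    rw [deriv_fun_add (((dF3 0 h0B).fun_mul (dF1 0 h0B)).fun_add ((dF2 0 h0B).fun_mul (dF2 0 h0B)))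
        (((dF2 0 h0B).fun_mul (dF2 0 h0B)).fun_add ((dF1 0 h0B).fun_mul (dF3 0 h0B))),
      deriv_fun_add ((dF3 0 h0B).fun_mul (dF1 0 h0B)) ((dF2 0 h0B).fun_mul (dF2 0 h0B)),
      deriv_fun_add ((dF2 0 h0B).fun_mul (dF2 0 h0B)) ((dF1 0 h0B).fun_mul (dF3 0 h0B)),
      deriv_fun_mul (dF3 0 h0B) (dF1 0 h0B), deriv_fun_mul (dF2 0 h0B) (dF2 0 h0B),
      deriv_fun_mul (dF1 0 h0B) (dF3 0 h0B), hd0]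
    ring
  have E3 : deriv (deriv (deriv h)) 0 =
      -2 * (deriv ω 0)^3 + deriv (deriv (deriv ω)) 0 := by
    have := BTB_aux_deriv_congr hB E2 h0B
    rw [this]
    have d2h : ∀ y ∈ B, DifferentiableAt ℂ (fun z => 2 - h z) y := fun y hy =>
      (differentiableAt_const (2:ℂ)).sub (dh y hy)
    have dnh : ∀ y ∈ B, DifferentiableAt ℂ (fun z => -(deriv h z)) y := fun y hy => (dh1 y hy).neg
    have dd1 : DifferentiableAt ℂ (fun z => deriv h z * (2 - h z) + h z * -(deriv h z)) 0 :=
      (((dh1 0 h0B).mul (d2h 0 h0B)).add ((dh 0 h0B).mul (dnh 0 h0B)))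
    rw [deriv_fun_add (dd1.fun_mul (dw1 0 h0B)) (((dh 0 h0B).fun_mul (d2h 0 h0B)).fun_mul (dw2 0 h0B)),
      deriv_fun_mul dd1 (dw1 0 h0B),
      deriv_fun_add ((dh1 0 h0B).fun_mul (d2h 0 h0B)) ((dh 0 h0B).fun_mul (dnh 0 h0B)),
      deriv_fun_mul (dh1 0 h0B) (d2h 0 h0B),
      deriv_fun_mul (dh 0 h0B) (dnh 0 h0B),
      deriv_fun_mul ((dh 0 h0B).fun_mul (d2h 0 h0B)) (dw2 0 h0B),
      deriv_fun_mul (dh 0 h0B) (d2h 0 h0B),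
      deriv_const_sub, deriv.fun_neg, h00]
    have e1 := E1 0 h0B
    rw [h00] at e1
    rw [e1]
    ring
  rw [E3, c1] at Ef3
  linear_combination Ef3

/-! ### Cauchy coefficient formula -/

open intervalIntegral in
lemma BTB_cauchy_coeff (ω : ℂ → ℂ) (hω : AnalyticOnNhd ℂ ω (ball 0 1)) {r : ℝ}
    (hr0 : 0 < r) (hr1 : r < 1) (n : ℕ) :
    (∫ θ in (0:ℝ)..2*Real.pi, ω (circleMap 0 r θ) * Complex.exp (-(n:ℂ) * θ * I))
      = 2 * Real.pi * r^n * (iteratedDeriv n ω 0 / n.factorial) := by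
  set r' : NNReal := ⟨r, hr0.le⟩ with hr'def
  have hrr : (r' : ℝ) = r := rfl
  have hsub : closedBall (0:ℂ) (r' : ℝ) ⊆ ball 0 1 := by
    intro z hz
    simp only [mem_closedBall, mem_ball] at *
    exact lt_of_le_of_lt hz (by rw [hrr]; exact hr1)
  have hdiff : DifferentiableOn ℂ ω (closedBall (0:ℂ) (r' : ℝ)) := fun z hz =>
    ((hω z (hsub hz)).differentiableAt).differentiableWithinAt
  have H : HasFPowerSeriesOnBall ω (cauchyPowerSeries ω 0 (r' : ℝ)) 0 r' :=
    hdiff.hasFPowerSeriesOnBall (by exact_mod_cast hr0)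
  have key : iteratedDeriv n ω 0 = (n.factorial : ℂ) *
      ((cauchyPowerSeries ω 0 (r' : ℝ)) n (fun _ => 1)) := by
    rw [iteratedDeriv_eq_iteratedFDeriv, ← H.factorial_smul 1 n]
    simp [nsmul_eq_mul]
  have hint : ∀ θ : ℝ, deriv (circleMap 0 (r':ℝ)) θ •
      ((1 / (circleMap 0 (r':ℝ) θ - 0)) ^ n • (circleMap 0 (r':ℝ) θ - 0)⁻¹ • ω (circleMap 0 (r':ℝ) θ))
      = I * ((r:ℂ)^n)⁻¹ * (ω (circleMap 0 r θ) * Complex.exp (-(n:ℂ) * θ * I)) := by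
    intro θ
    rw [deriv_circleMap]
    simp only [circleMap_zero, sub_zero, smul_eq_mul, hrr]
    have hexp : Complex.exp (-(n:ℂ) * θ * I) = (Complex.exp ((θ:ℂ) * I))⁻¹ ^ n := by
      rw [← Complex.exp_neg, ← Complex.exp_nat_mul]
      ring_nf
    rw [hexp]
    have hrne : (r:ℂ) ≠ 0 := by exact_mod_cast hr0.ne'
    have hene : Complex.exp ((θ:ℂ) * I) ≠ 0 := Complex.exp_ne_zero _
    field_simp
    rw [mul_right_comm, ← mul_pow, mul_comm]
    congr 2
    field_simp
  have comp : ((cauchyPowerSeries ω 0 (r' : ℝ)) n (fun _ => 1)) =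
      (2 * (Real.pi:ℂ) * I)⁻¹ * (I * ((r:ℂ)^n)⁻¹ *
        ∫ θ in (0:ℝ)..2*Real.pi, ω (circleMap 0 r θ) * Complex.exp (-(n:ℂ) * θ * I)) := by
    rw [cauchyPowerSeries_apply, circleIntegral]
    simp only [hint]
    rw [intervalIntegral.integral_const_mul, smul_eq_mul]
  set J := ∫ θ in (0:ℝ)..2*Real.pi, ω (circleMap 0 r θ) * Complex.exp (-(n:ℂ) * θ * I) with hJ
  rw [key, comp]
  have hpi : (Real.pi : ℂ) ≠ 0 := by exact_mod_cast Real.pi_ne_zero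
  have hrn : ((r:ℂ))^n ≠ 0 := pow_ne_zero _ (by exact_mod_cast hr0.ne')
  have hfac : (n.factorial : ℂ) ≠ 0 := by exact_mod_cast n.factorial_ne_zero
  have hI : (I:ℂ) ≠ 0 := Complex.I_ne_zero
  field_simp

open intervalIntegral in
lemma BTB_intervalIntegral_conj {f : ℝ → ℂ} {a b : ℝ} :
    (∫ x in a..b, (starRingEnd ℂ) (f x)) = (starRingEnd ℂ) (∫ x in a..b, f x) := by
  simp only [intervalIntegral, integral_conj, map_sub]

open intervalIntegral in
lemma BTB_bessel3 (g : ℝ → ℂ) (hg : Continuous g) (hb : ∀ θ : ℝ, ‖g θ‖ ≤ 1)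
    (d1 d2 d3 : ℂ)
    (h1 : (∫ θ in (0:ℝ)..2*Real.pi, g θ * Complex.exp ((-1:ℂ) * θ * I)) = 2*Real.pi*d1)
    (h2 : (∫ θ in (0:ℝ)..2*Real.pi, g θ * Complex.exp ((-2:ℂ) * θ * I)) = 2*Real.pi*d2)
    (h3 : (∫ θ in (0:ℝ)..2*Real.pi, g θ * Complex.exp ((-3:ℂ) * θ * I)) = 2*Real.pi*d3) :
    Complex.normSq d1 + Complex.normSq d2 + Complex.normSq d3 ≤ 1 := by
  have hπ := Real.pi_pos
  -- exponential integrals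
  have hEk : ∀ k : ℤ, k ≠ 0 → (∫ θ in (0:ℝ)..2*Real.pi, Complex.exp ((k:ℂ)*θ*I)) = 0 := by
    intro k hk
    have hc : ((k:ℂ)*I) ≠ 0 := mul_ne_zero (Int.cast_ne_zero.2 hk) Complex.I_ne_zero
    have h2 := integral_exp_mul_complex (a:=(0:ℝ)) (b:=2*Real.pi) hc
    have hrw : ∀ θ:ℝ, (k:ℂ)*θ*I = ((k:ℂ)*I)*θ := fun θ => by ring
    simp only [hrw]
    rw [h2]
    rw [show ((k:ℂ)*I)*((2*Real.pi:ℝ):ℂ) = (k:ℂ)*(2*Real.pi)*I by push_cast; ring]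
    rw [show Complex.exp ((k:ℂ)*(2*Real.pi)*I) = 1 by
      rw [← Complex.exp_int_mul_two_pi_mul_I k]; congr 1; push_cast; ring]
    simp
  have hE0 : (∫ θ in (0:ℝ)..2*Real.pi, Complex.exp ((0:ℂ)*θ*I)) = 2*(Real.pi:ℂ) := by
    simp only [zero_mul, Complex.exp_zero]
    rw [intervalIntegral.integral_const, Complex.real_smul]
    push_cast; ring
  -- continuity
  have cexpf : ∀ m:ℂ, Continuous (fun θ:ℝ => Complex.exp (m*θ*I)) := fun m =>
    Complex.continuous_exp.comp (((continuous_const).mul Complex.continuous_ofReal).mul continuous_const)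
  set S : ℝ → ℂ := fun θ => d1 * Complex.exp ((1:ℂ)*θ*I) + d2 * Complex.exp ((2:ℂ)*θ*I)
      + d3 * Complex.exp ((3:ℂ)*θ*I) with hSdef
  set T : ℝ → ℂ := fun θ => (starRingEnd ℂ) d1 * Complex.exp ((-1:ℂ)*θ*I)
      + (starRingEnd ℂ) d2 * Complex.exp ((-2:ℂ)*θ*I)
      + (starRingEnd ℂ) d3 * Complex.exp ((-3:ℂ)*θ*I) with hTdef
  have cS : Continuous S := ((continuous_const.mul (cexpf 1)).add (continuous_const.mul (cexpf 2))).add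
      (continuous_const.mul (cexpf 3))
  have cT : Continuous T := ((continuous_const.mul (cexpf (-1))).add (continuous_const.mul (cexpf (-2)))).add
      (continuous_const.mul (cexpf (-3)))
  -- conj S = T
  have hce : ∀ (m:ℂ), (starRingEnd ℂ) m = m → ∀ θ:ℝ,
      (starRingEnd ℂ) (Complex.exp (m*θ*I)) = Complex.exp ((-m)*θ*I) := by
    intro m hm θ
    rw [← Complex.exp_conj]
    congr 1
    rw [map_mul, map_mul, hm, Complex.conj_I, Complex.conj_ofReal]
    ring
  have hT : ∀ θ:ℝ, (starRingEnd ℂ) (S θ) = T θ := by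
    intro θ
    have e1 : (starRingEnd ℂ) (1:ℂ) = 1 := by simp
    have e2 : (starRingEnd ℂ) (2:ℂ) = 2 := by
      rw [show ((2:ℂ)) = ((2:ℝ):ℂ) by norm_num, Complex.conj_ofReal]
    have e3 : (starRingEnd ℂ) (3:ℂ) = 3 := by
      rw [show ((3:ℂ)) = ((3:ℝ):ℂ) by norm_num, Complex.conj_ofReal]
    simp only [hSdef, hTdef, map_add, map_mul, hce 1 e1 θ, hce 2 e2 θ, hce 3 e3 θ]
  -- B = ∫ g * T
  have intgT : ∀ m:ℂ, IntervalIntegrable (fun θ:ℝ => g θ * Complex.exp (m*θ*I))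
      MeasureTheory.volume 0 (2*Real.pi) := fun m => (hg.mul (cexpf m)).intervalIntegrable _ _
  have hB : (∫ θ in (0:ℝ)..2*Real.pi, g θ * T θ)
      = ((2*Real.pi*(Complex.normSq d1 + Complex.normSq d2 + Complex.normSq d3) : ℝ) : ℂ) := by
    have hpt : ∀ θ:ℝ, g θ * T θ =
        (starRingEnd ℂ) d1 * (g θ * Complex.exp ((-1:ℂ)*θ*I))
        + (starRingEnd ℂ) d2 * (g θ * Complex.exp ((-2:ℂ)*θ*I))
        + (starRingEnd ℂ) d3 * (g θ * Complex.exp ((-3:ℂ)*θ*I)) := by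
      intro θ; simp only [hTdef]; ring
    simp only [hpt]
    rw [intervalIntegral.integral_add (((intgT (-1)).const_mul _).add ((intgT (-2)).const_mul _))
        ((intgT (-3)).const_mul _),
      intervalIntegral.integral_add ((intgT (-1)).const_mul _) ((intgT (-2)).const_mul _),
      intervalIntegral.integral_const_mul, intervalIntegral.integral_const_mul,
      intervalIntegral.integral_const_mul, h1, h2, h3]
    push_cast
    linear_combination (2*(Real.pi:ℂ)) * (Complex.mul_conj d1) + (2*(Real.pi:ℂ)) * (Complex.mul_conj d2)
      + (2*(Real.pi:ℂ)) * (Complex.mul_conj d3)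
  -- D = ∫ S * T
  have hmul : ∀ (a b : ℂ) (θ:ℝ), Complex.exp (a*θ*I) * Complex.exp (b*θ*I)
      = Complex.exp ((a+b)*θ*I) := by
    intro a b θ; rw [← Complex.exp_add]; congr 1; ring
  have hSS : ∀ θ:ℝ, S θ * T θ =
      (d1*(starRingEnd ℂ) d1 + d2*(starRingEnd ℂ) d2 + d3*(starRingEnd ℂ) d3)
        * Complex.exp ((0:ℂ)*θ*I)
      + (d1*(starRingEnd ℂ) d2 + d2*(starRingEnd ℂ) d3) * Complex.exp ((-1:ℂ)*θ*I)
      + (d1*(starRingEnd ℂ) d3) * Complex.exp ((-2:ℂ)*θ*I)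
      + (d2*(starRingEnd ℂ) d1 + d3*(starRingEnd ℂ) d2) * Complex.exp ((1:ℂ)*θ*I)
      + (d3*(starRingEnd ℂ) d1) * Complex.exp ((2:ℂ)*θ*I) := by
    intro θ
    simp only [hSdef, hTdef]
    rw [show (d1 * Complex.exp ((1:ℂ)*θ*I) + d2 * Complex.exp ((2:ℂ)*θ*I)
        + d3 * Complex.exp ((3:ℂ)*θ*I)) *
        ((starRingEnd ℂ) d1 * Complex.exp ((-1:ℂ)*θ*I)
        + (starRingEnd ℂ) d2 * Complex.exp ((-2:ℂ)*θ*I)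
        + (starRingEnd ℂ) d3 * Complex.exp ((-3:ℂ)*θ*I)) =
      d1*(starRingEnd ℂ) d1 * (Complex.exp ((1:ℂ)*θ*I) * Complex.exp ((-1:ℂ)*θ*I))
      + d1*(starRingEnd ℂ) d2 * (Complex.exp ((1:ℂ)*θ*I) * Complex.exp ((-2:ℂ)*θ*I))
      + d1*(starRingEnd ℂ) d3 * (Complex.exp ((1:ℂ)*θ*I) * Complex.exp ((-3:ℂ)*θ*I))
      + d2*(starRingEnd ℂ) d1 * (Complex.exp ((2:ℂ)*θ*I) * Complex.exp ((-1:ℂ)*θ*I))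
      + d2*(starRingEnd ℂ) d2 * (Complex.exp ((2:ℂ)*θ*I) * Complex.exp ((-2:ℂ)*θ*I))
      + d2*(starRingEnd ℂ) d3 * (Complex.exp ((2:ℂ)*θ*I) * Complex.exp ((-3:ℂ)*θ*I))
      + d3*(starRingEnd ℂ) d1 * (Complex.exp ((3:ℂ)*θ*I) * Complex.exp ((-1:ℂ)*θ*I))
      + d3*(starRingEnd ℂ) d2 * (Complex.exp ((3:ℂ)*θ*I) * Complex.exp ((-2:ℂ)*θ*I))
      + d3*(starRingEnd ℂ) d3 * (Complex.exp ((3:ℂ)*θ*I) * Complex.exp ((-3:ℂ)*θ*I)) by ring]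
    rw [hmul 1 (-1), hmul 1 (-2), hmul 1 (-3), hmul 2 (-1), hmul 2 (-2), hmul 2 (-3),
      hmul 3 (-1), hmul 3 (-2), hmul 3 (-3)]
    norm_num
    ring
  have intE : ∀ m:ℂ, IntervalIntegrable (fun θ:ℝ => Complex.exp (m*θ*I))
      MeasureTheory.volume 0 (2*Real.pi) := fun m => (cexpf m).intervalIntegrable _ _
  have hD : (∫ θ in (0:ℝ)..2*Real.pi, S θ * T θ)
      = ((2*Real.pi*(Complex.normSq d1 + Complex.normSq d2 + Complex.normSq d3) : ℝ) : ℂ) := by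
    simp only [hSS]
    rw [intervalIntegral.integral_add (((((intE 0).const_mul _).add ((intE (-1)).const_mul _)).add
          ((intE (-2)).const_mul _)).add ((intE 1).const_mul _)) ((intE 2).const_mul _),
      intervalIntegral.integral_add ((((intE 0).const_mul _).add ((intE (-1)).const_mul _)).add
          ((intE (-2)).const_mul _)) ((intE 1).const_mul _),
      intervalIntegral.integral_add (((intE 0).const_mul _).add ((intE (-1)).const_mul _))
          ((intE (-2)).const_mul _),
      intervalIntegral.integral_add ((intE 0).const_mul _) ((intE (-1)).const_mul _),
      intervalIntegral.integral_const_mul, intervalIntegral.integral_const_mul,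
      intervalIntegral.integral_const_mul, intervalIntegral.integral_const_mul,
      intervalIntegral.integral_const_mul, hE0]
    rw [show ((-1:ℂ)) = ((-1:ℤ):ℂ) by norm_num, hEk (-1) (by norm_num)]
    rw [show ((-2:ℂ)) = ((-2:ℤ):ℂ) by norm_num, hEk (-2) (by norm_num)]
    rw [show ((1:ℂ)) = ((1:ℤ):ℂ) by norm_num, hEk 1 (by norm_num)]
    rw [show ((2:ℂ)) = ((2:ℤ):ℂ) by norm_num, hEk 2 (by norm_num)]
    push_cast
    linear_combination (2*(Real.pi:ℂ)) * (Complex.mul_conj d1) + (2*(Real.pi:ℂ)) * (Complex.mul_conj d2)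
      + (2*(Real.pi:ℂ)) * (Complex.mul_conj d3)
  -- the expansion of the nonnegative integral
  have hpt2 : ∀ θ:ℝ, ((Complex.normSq (g θ - S θ) : ℝ) : ℂ)
      = g θ * (starRingEnd ℂ) (g θ) - g θ * T θ - (starRingEnd ℂ) (g θ * T θ) + S θ * T θ := by
    intro θ
    rw [← Complex.mul_conj (g θ - S θ), map_sub, hT θ, map_mul, ← hT θ, Complex.conj_conj]
    ring
  have intgg : IntervalIntegrable (fun θ:ℝ => g θ * (starRingEnd ℂ) (g θ))
      MeasureTheory.volume 0 (2*Real.pi) := (hg.mul (Complex.continuous_conj.comp hg)).intervalIntegrable _ _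
  have intgT2 : IntervalIntegrable (fun θ:ℝ => g θ * T θ)
      MeasureTheory.volume 0 (2*Real.pi) := (hg.mul cT).intervalIntegrable _ _
  have intgT3 : IntervalIntegrable (fun θ:ℝ => (starRingEnd ℂ) (g θ * T θ))
      MeasureTheory.volume 0 (2*Real.pi) := (Complex.continuous_conj.comp (hg.mul cT)).intervalIntegrable _ _
  have intST : IntervalIntegrable (fun θ:ℝ => S θ * T θ)
      MeasureTheory.volume 0 (2*Real.pi) := (cS.mul cT).intervalIntegrable _ _
  have big : ((∫ θ in (0:ℝ)..2*Real.pi, Complex.normSq (g θ - S θ)) : ℂ)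
      = ((∫ θ in (0:ℝ)..2*Real.pi, Complex.normSq (g θ)) : ℂ)
        - ((2*Real.pi*(Complex.normSq d1 + Complex.normSq d2 + Complex.normSq d3) : ℝ) : ℂ) := by
    simp only [hpt2]
    rw [intervalIntegral.integral_add (((intgg.sub intgT2)).sub intgT3) intST,
      intervalIntegral.integral_sub (intgg.sub intgT2) intgT3,
      intervalIntegral.integral_sub intgg intgT2,
      BTB_intervalIntegral_conj, hB, hD]
    have hgg : (∫ θ in (0:ℝ)..2*Real.pi, g θ * (starRingEnd ℂ) (g θ))
        = ((∫ θ in (0:ℝ)..2*Real.pi, Complex.normSq (g θ)) : ℂ) := by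
      apply intervalIntegral.integral_congr
      intro θ _
      exact Complex.mul_conj (g θ)
    rw [hgg, Complex.conj_ofReal]
    ring
  -- conclude
  have hpos : 0 ≤ ∫ θ in (0:ℝ)..2*Real.pi, Complex.normSq (g θ - S θ) :=
    intervalIntegral.integral_nonneg (by positivity) (fun θ _ => Complex.normSq_nonneg _)
  have hup : (∫ θ in (0:ℝ)..2*Real.pi, Complex.normSq (g θ)) ≤ 2*Real.pi := by
    have h2 : (∫ θ in (0:ℝ)..2*Real.pi, (1:ℝ)) = 2*Real.pi := by
      rw [intervalIntegral.integral_const]; simp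
    calc (∫ θ in (0:ℝ)..2*Real.pi, Complex.normSq (g θ))
        ≤ ∫ _θ in (0:ℝ)..2*Real.pi, (1:ℝ) := by
          apply intervalIntegral.integral_mono_on (by positivity)
            ((Complex.continuous_normSq.comp hg).intervalIntegrable _ _)
            (intervalIntegrable_const)
          intro θ _
          have := hb θ
          show Complex.normSq (g θ) ≤ 1
          rw [← Complex.sq_norm]
          nlinarith [norm_nonneg (g θ)]
      _ = 2*Real.pi := h2
  have breal : (∫ θ in (0:ℝ)..2*Real.pi, Complex.normSq (g θ - S θ))
      = (∫ θ in (0:ℝ)..2*Real.pi, Complex.normSq (g θ))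
        - 2*Real.pi*(Complex.normSq d1 + Complex.normSq d2 + Complex.normSq d3) := by
    have hbig := big
    rw [intervalIntegral.integral_ofReal, intervalIntegral.integral_ofReal] at hbig
    exact_mod_cast hbig
  nlinarith [hpos, hup, breal, hπ]

lemma BTB_parseval3 (ω : ℂ → ℂ) (hω : AnalyticOnNhd ℂ ω (ball 0 1))
    (hωb : ∀ z ∈ ball (0:ℂ) 1, ‖ω z‖ < 1) :
    Complex.normSq (iteratedDeriv 1 ω 0 / 1)
    + Complex.normSq (iteratedDeriv 2 ω 0 / 2)
    + Complex.normSq (iteratedDeriv 3 ω 0 / 6) ≤ 1 := by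
  set c1 : ℂ := iteratedDeriv 1 ω 0 / 1 with hc1
  set c2 : ℂ := iteratedDeriv 2 ω 0 / 2 with hc2
  set c3 : ℂ := iteratedDeriv 3 ω 0 / 6 with hc3
  have key : ∀ r : ℝ, r ∈ Set.Ioo (0:ℝ) 1 →
      r^2 * Complex.normSq c1 + r^4 * Complex.normSq c2 + r^6 * Complex.normSq c3 ≤ 1 := by
    intro r hr
    obtain ⟨hr0, hr1⟩ := hr
    set g : ℝ → ℂ := fun θ => ω (circleMap 0 r θ) with hgdef
    have hmem : ∀ θ : ℝ, circleMap 0 r θ ∈ ball (0:ℂ) 1 := by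
      intro θ
      simp only [mem_ball, dist_zero_right, norm_circleMap_zero,
        abs_of_pos hr0]
      exact hr1
    have hg : Continuous g := by
      rw [continuous_iff_continuousAt]
      intro θ
      exact ((hω _ (hmem θ)).continuousAt).comp (continuous_circleMap 0 r).continuousAt
    have hb : ∀ θ : ℝ, ‖g θ‖ ≤ 1 := fun θ => (hωb _ (hmem θ)).le
    have happ : ∀ (n : ℕ) (cn : ℂ), iteratedDeriv n ω 0 / n.factorial = cn →
        (∫ θ in (0:ℝ)..2*Real.pi, g θ * Complex.exp ((-(n:ℂ)) * θ * I))
          = 2*Real.pi*((r:ℂ)^n * cn) := by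
      intro n cn hcn
      have := BTB_cauchy_coeff ω hω hr0 hr1 n
      rw [hcn] at this
      rw [this]
      push_cast
      ring
    have h1 := happ 1 c1 (by rw [hc1]; norm_num)
    have h2 := happ 2 c2 (by rw [hc2]; norm_num [Nat.factorial])
    have h3 := happ 3 c3 (by rw [hc3]; norm_num [Nat.factorial])
    simp only [Nat.cast_one, Nat.cast_ofNat] at h1 h2 h3
    have hbb := BTB_bessel3 g hg hb _ _ _ h1 h2 h3
    have hns : ∀ (n : ℕ) (c : ℂ), Complex.normSq ((r:ℂ)^n * c) = r^(2*n) * Complex.normSq c := by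
      intro n c
      rw [Complex.normSq_mul, ← Complex.ofReal_pow, Complex.normSq_ofReal]
      rw [pow_mul]
      ring
    rw [hns 1 c1, hns 2 c2, hns 3 c3] at hbb
    norm_num at hbb
    linarith
  -- take the limit r → 1⁻
  have hlim : Filter.Tendsto
      (fun r:ℝ => r^2 * Complex.normSq c1 + r^4 * Complex.normSq c2 + r^6 * Complex.normSq c3)
      (nhdsWithin 1 (Set.Ioo (0:ℝ) 1))
      (nhds (Complex.normSq c1 + Complex.normSq c2 + Complex.normSq c3)) := by
    have hcont : Continuous (fun r:ℝ => r^2 * Complex.normSq c1 + r^4 * Complex.normSq c2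
        + r^6 * Complex.normSq c3) := by continuity
    have h := (hcont.tendsto 1).mono_left
      (nhdsWithin_le_nhds (s := Set.Ioo (0:ℝ) 1))
    simpa using h
  have hne : (nhdsWithin (1:ℝ) (Set.Ioo (0:ℝ) 1)).NeBot := by
    apply mem_closure_iff_nhdsWithin_neBot.mp
    rw [closure_Ioo (by norm_num : (0:ℝ) ≠ 1)]
    exact ⟨by norm_num, le_refl 1⟩
  exact le_of_tendsto hlim (Filter.eventually_iff_exists_mem.mpr
    ⟨Set.Ioo 0 1, self_mem_nhdsWithin, key⟩)

lemma BTB_final_ineq {x y z : ℝ} (hx : 0 ≤ x) (hy : 0 ≤ y) (hz : 0 ≤ z)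
    (h : x^2+y^2+z^2 ≤ 1) :
    5/48*(x*y) + 1/64*x^3 + 1/8*z ≤ 1/8 := by
  have hx1 : x ≤ 1 := by nlinarith
  have hz1 : z ≤ 1 := by nlinarith
  nlinarith [sq_nonneg (y - 5*x/6), sq_nonneg (1-z),
    mul_nonneg (mul_nonneg hx hx) (sub_nonneg.2 hx1), sq_nonneg x, sq_nonneg y]

theorem BTB_zalcman_bound (f : ℂ → ℂ) (hf : IsBTB f) :
    ‖tCoeff f 2 * tCoeff f 3 - tCoeff f 4‖ ≤ 1/8 := by
  obtain ⟨hfa, hf0, hd0, hinj, ω, hωa, hω0, hωb, hd⟩ := hf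
  obtain ⟨r1, r2, r3⟩ := BTB_coeff_relations f ω hfa hωa hωb hd hd0
  have hP := BTB_parseval3 ω hωa hωb
  have e1 : iteratedDeriv 1 ω 0 = deriv ω 0 := by rw [iteratedDeriv_one]
  have e2 : iteratedDeriv 2 ω 0 = deriv (deriv ω) 0 := by
    rw [show (2:ℕ) = 1+1 by norm_num, iteratedDeriv_succ, iteratedDeriv_one]
  have e3 : iteratedDeriv 3 ω 0 = deriv (deriv (deriv ω)) 0 := by
    rw [show (3:ℕ) = 1+1+1 by norm_num, iteratedDeriv_succ, iteratedDeriv_succ,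
      iteratedDeriv_one]
  have g2 : iteratedDeriv 2 f 0 = deriv (deriv f) 0 := by
    rw [show (2:ℕ) = 1+1 by norm_num, iteratedDeriv_succ, iteratedDeriv_one]
  have g3 : iteratedDeriv 3 f 0 = deriv (deriv (deriv f)) 0 := by
    rw [show (3:ℕ) = 1+1+1 by norm_num, iteratedDeriv_succ, iteratedDeriv_succ,
      iteratedDeriv_one]
  have g4 : iteratedDeriv 4 f 0 = deriv (deriv (deriv (deriv f))) 0 := by
    rw [show (4:ℕ) = 1+1+1+1 by norm_num, iteratedDeriv_succ, iteratedDeriv_succ,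
      iteratedDeriv_succ, iteratedDeriv_one]
  rw [e1, e2, e3] at hP
  have hP' : ‖deriv ω 0‖ ^ 2 + ‖deriv (deriv ω) 0 / 2‖ ^ 2
      + ‖deriv (deriv (deriv ω)) 0 / 6‖ ^ 2 ≤ 1 := by
    rw [Complex.sq_norm, Complex.sq_norm, Complex.sq_norm]
    simpa using hP
  have goal_eq : tCoeff f 2 * tCoeff f 3 - tCoeff f 4 =
      ((5/48:ℝ):ℂ)*(deriv ω 0 * (deriv (deriv ω) 0 / 2))
      + ((1/64:ℝ):ℂ)*(deriv ω 0)^3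
      - ((1/8:ℝ):ℂ)*(deriv (deriv (deriv ω)) 0 / 6) := by
    rw [tCoeff, tCoeff, tCoeff, g2, g3, g4, r1, r2, r3]
    norm_num [Nat.factorial]
    push_cast
    ring
  rw [goal_eq]
  have habs : ∀ (q : ℝ) (w : ℂ), 0 ≤ q → ‖(q:ℂ)*w‖ = q * ‖w‖ := by
    intro q w hq
    rw [norm_mul, Complex.norm_real, Real.norm_eq_abs, _root_.abs_of_nonneg hq]
  set A : ℂ := ((5/48:ℝ):ℂ)*(deriv ω 0 * (deriv (deriv ω) 0 / 2)) with hA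
  set Bc : ℂ := ((1/64:ℝ):ℂ)*(deriv ω 0)^3 with hB
  set Cc : ℂ := ((1/8:ℝ):ℂ)*(deriv (deriv (deriv ω)) 0 / 6) with hC
  have tri : ‖A + Bc - Cc‖ ≤
      5/48*(‖deriv ω 0‖ * ‖deriv (deriv ω) 0 / 2‖)
      + 1/64*(‖deriv ω 0‖)^3
      + 1/8*(‖deriv (deriv (deriv ω)) 0 / 6‖) := by
    calc ‖A + Bc - Cc‖ = ‖A + Bc - Cc‖ := rfl
      _ ≤ ‖A + Bc‖ + ‖Cc‖ := norm_sub_le _ _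
      _ ≤ ‖A‖ + ‖Bc‖ + ‖Cc‖ := by linarith [norm_add_le A Bc]
      _ = ‖A‖ + ‖Bc‖ + ‖Cc‖ := rfl
      _ = 5/48*(‖deriv ω 0‖ * ‖deriv (deriv ω) 0 / 2‖)
          + 1/64*(‖deriv ω 0‖)^3
          + 1/8*(‖deriv (deriv (deriv ω)) 0 / 6‖) := by
        rw [hA, hB, hC, habs _ _ (by norm_num), habs _ _ (by norm_num),
          habs _ _ (by norm_num), norm_mul, norm_pow]
  refine tri.trans ?_
  exact BTB_final_ineq (norm_nonneg _) (norm_nonneg _)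
    (norm_nonneg _) hP'
end
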